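/- arXiv:1109.2563 — 7 statements merged into one kernel-verified Lean document; each statement's English description precedes it below -/
import Mathlib

section
/- For every Boolean function f : {0,1}^n × {0,1}^n → {0,1}, the garden-hose complexity of f satisfies GH(f) ≤ 2^n + 1. -/
/-- A partial matching on the vertex type `V`, encoded by a partner function:
`m i = some j` means that there is an edge between `i` and `j`;
the graph `{ {i,j} | m i = some j }` then has maximum degree at most `1`
and no self-loops. -/
def IsPartialMatching {V : Type*} (m : V → Option V) : Prop :=
  ∀ i j, m i = some j → i ≠ j ∧ m j = some i

/-- The position of the water in a garden-hose game with `s` pipes: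
`atAlice i` (resp. `atBob i`) means the water has just arrived at Alice's
(resp. Bob's) end of pipe `i`; `exitA` / `exitB` mean the water has exited
on Alice's / Bob's side, i.e. the maximal path starting at the tap has ended
in `A∘` / in `B`. -/
inductive GHState (s : ℕ) where
  | atAlice : Fin s → GHState s
  | atBob : Fin s → GHState s
  | exitA : GHState s
  | exitB : GHState s
  deriving DecidableEq

/-- Vertex `k` of `A∘ = {0, 1, ..., s}` viewed as a pipe: vertex `0` is the water
tap (no pipe), and vertex `i + 1` is Alice's end of pipe `i`. -/
def toPipe {s : ℕ} (k : Fin (s + 1)) : Option (Fin s) :=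
  if h : (k : ℕ) = 0 then none
  else some ⟨(k : ℕ) - 1, by have := k.isLt; omega⟩

/-- One step of the water flow, given Alice's connections `a` on `A∘ = {0,...,s}`
and Bob's connections `b` on `B = {1,...,s}` (indexed by pipes `Fin s`). -/
def ghStep {s : ℕ} (a : Fin (s + 1) → Option (Fin (s + 1)))
    (b : Fin s → Option (Fin s)) : GHState s → GHState s
  | GHState.atAlice i =>
    match a i.succ with
    | none => GHState.exitA
    | some k =>
      match toPipe k with
      | none => GHState.exitA
      | some p => GHState.atBob p
  | GHState.atBob i =>
    match b i with
    | none => GHState.exitB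
    | some j => GHState.atAlice j
  | GHState.exitA => GHState.exitA
  | GHState.exitB => GHState.exitB

/-- The start of the water flow: the tap (vertex `0` of `A∘`) is connected by
Alice to at most one pipe. -/
def ghStart {s : ℕ} (a : Fin (s + 1) → Option (Fin (s + 1))) : GHState s :=
  match a 0 with
  | none => GHState.exitA
  | some k =>
    match toPipe k with
    | none => GHState.exitA
    | some p => GHState.atBob p

/-- The endpoint of the maximal path `π(x,y)` starting at the tap: since the graph
has maximum degree `2` and the path is simple, it is reached after at most
`2s + 2` steps. -/
def ghResult {s : ℕ} (a : Fin (s + 1) → Option (Fin (s + 1)))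
    (b : Fin s → Option (Fin s)) : GHState s :=
  (ghStep a b)^[2 * s + 2] (ghStart a)

/-- A garden-hose game of size `s` on inputs `{0,1}^n × {0,1}^n`: for every input
`x` Alice chooses a partial matching `EA x` on `A∘ = {0,1,…,s}` and for every
input `y` Bob chooses a partial matching `EB y` on `B = {1,…,s}`. -/
structure GHGame (n s : ℕ) where
  EA : (Fin n → Bool) → Fin (s + 1) → Option (Fin (s + 1))
  EB : (Fin n → Bool) → Fin s → Option (Fin s)
  matchA : ∀ x, IsPartialMatching (EA x)
  matchB : ∀ y, IsPartialMatching (EB y)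

/-- Where the water exits on input `(x, y)`. -/
def GHGame.run {n s : ℕ} (G : GHGame n s) (x y : Fin n → Bool) : GHState s :=
  ghResult (G.EA x) (G.EB y)

/-- The game `G` computes `f` if for all inputs the maximal path from the tap ends
in `A∘` whenever `f x y = 0` (water exits on Alice's side) and in `B` whenever
`f x y = 1` (water exits on Bob's side). -/
def GHGame.Computes {n s : ℕ} (G : GHGame n s)
    (f : (Fin n → Bool) → (Fin n → Bool) → Bool) : Prop :=
  ∀ x y, G.run x y = if f x y then GHState.exitB else GHState.exitA

/-- The garden-hose complexity of `f`: the minimal number of pipes of a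
garden-hose game computing `f`. -/
noncomputable def GH {n : ℕ} (f : (Fin n → Bool) → (Fin n → Bool) → Bool) : ℕ :=
  sInf {s : ℕ | ∃ G : GHGame n s, G.Computes f}


def pidx (k : ℕ) : ℕ := if k % 2 = 0 then k + 1 else k - 1

lemma pidx_lt {k m : ℕ} (hk : k < m) (hm : Even m) : pidx k < m := by
  unfold pidx
  obtain ⟨c, rfl⟩ := hm
  split <;> omega

lemma pidx_pidx (k : ℕ) : pidx (pidx k) = k := by
  unfold pidx
  by_cases h : k % 2 = 0
  · rw [if_pos h, if_neg (by omega)]; omega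
  · rw [if_neg h, if_pos (by omega)]; omega

lemma pidx_ne (k : ℕ) : pidx k ≠ k := by
  unfold pidx; split <;> omega

def finsetMatch {s : ℕ} (T : Finset (Fin s)) (hT : Even T.card) :
    Fin s → Option (Fin s) := fun t =>
  if h : t ∈ T.sort (· ≤ ·) then
    some ((T.sort (· ≤ ·))[pidx (List.idxOf t (T.sort (· ≤ ·)))]'(by
      refine pidx_lt ?_ (by rwa [Finset.length_sort])
      exact List.idxOf_lt_length_iff.2 h))
  else none

lemma finsetMatch_none {s : ℕ} {T : Finset (Fin s)} (hT : Even T.card)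
    {t : Fin s} (h : t ∉ T) : finsetMatch T hT t = none := by
  unfold finsetMatch
  rw [dif_neg (by rwa [Finset.mem_sort])]

lemma finsetMatch_some {s : ℕ} {T : Finset (Fin s)} (hT : Even T.card)
    {t : Fin s} (h : t ∈ T) : ∃ u, finsetMatch T hT t = some u := by
  unfold finsetMatch
  rw [dif_pos (by rwa [Finset.mem_sort])]
  exact ⟨_, rfl⟩

lemma finsetMatch_spec {s : ℕ} {T : Finset (Fin s)} (hT : Even T.card)
    {t u : Fin s} (h : finsetMatch T hT t = some u) :
    t ∈ T ∧ u ∈ T ∧ t ≠ u ∧ finsetMatch T hT u = some t := by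
  have hnd : (T.sort (· ≤ ·)).Nodup := Finset.sort_nodup _ _
  unfold finsetMatch at h
  split at h
  case isTrue ht =>
    injection h with h
    have hil : List.idxOf t (T.sort (· ≤ ·)) < (T.sort (· ≤ ·)).length :=
      List.idxOf_lt_length_iff.2 ht
    have hum : u ∈ T.sort (· ≤ ·) := h ▸ List.getElem_mem _
    have hidxu : List.idxOf u (T.sort (· ≤ ·))
        = pidx (List.idxOf t (T.sort (· ≤ ·))) := by
      rw [← h]; simp [hnd]
    have htne : t ≠ u := by
      intro he
      rw [← he] at hidxu
      exact pidx_ne _ hidxu.symm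
    refine ⟨(Finset.mem_sort _).1 ht, (Finset.mem_sort _).1 hum, htne, ?_⟩
    unfold finsetMatch
    rw [dif_pos hum]
    congr 1
    have hp : pidx (List.idxOf u (T.sort (· ≤ ·)))
        = List.idxOf t (T.sort (· ≤ ·)) := by rw [hidxu, pidx_pidx]
    simp only [hp]
    exact List.getElem_idxOf hil
  case isFalse => exact absurd h (by simp)

lemma finsetMatch_isPartialMatching {s : ℕ} (T : Finset (Fin s)) (hT : Even T.card) :
    IsPartialMatching (finsetMatch T hT) := by
  intro i j h
  obtain ⟨_, _, hne, hsym⟩ := finsetMatch_spec hT h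
  exact ⟨hne, hsym⟩

def boolEnc (n : ℕ) : (Fin n → Bool) ≃ Fin (2 ^ n) :=
  (Equiv.arrowCongr (Equiv.refl (Fin n)) finTwoEquiv.symm).trans finFunctionFinEquiv

def encPipe {n : ℕ} (x : Fin n → Bool) : Fin (2 ^ n + 1) :=
  ⟨(boolEnc n x).val, by have := (boolEnc n x).isLt; omega⟩

lemma encPipe_lt {n : ℕ} (x : Fin n → Bool) : (encPipe x : ℕ) < 2 ^ n :=
  (boolEnc n x).isLt

def zpred (n : ℕ) (f : (Fin n → Bool) → (Fin n → Bool) → Bool)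
    (y : Fin n → Bool) (p : Fin (2 ^ n + 1)) : Bool :=
  if h : (p : ℕ) < 2 ^ n then !(f ((boolEnc n).symm ⟨p, h⟩) y) else false

lemma zpred_encPipe {n : ℕ} (f : (Fin n → Bool) → (Fin n → Bool) → Bool)
    (x y : Fin n → Bool) : zpred n f y (encPipe x) = !(f x y) := by
  unfold zpred
  rw [dif_pos (encPipe_lt x)]
  congr 1
  have : (⟨(encPipe x : ℕ), encPipe_lt x⟩ : Fin (2 ^ n)) = boolEnc n x := rfl
  rw [this, Equiv.symm_apply_apply]

/-- Bob's set of "zero" pipes, padded to even cardinality with the extra pipe. -/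
def zset (n : ℕ) (f : (Fin n → Bool) → (Fin n → Bool) → Bool)
    (y : Fin n → Bool) : Finset (Fin (2 ^ n + 1)) :=
  let Z := Finset.univ.filter (fun p => zpred n f y p = true)
  if Even Z.card then Z else insert ⟨2 ^ n, by omega⟩ Z

lemma zset_even (n : ℕ) (f : (Fin n → Bool) → (Fin n → Bool) → Bool)
    (y : Fin n → Bool) : Even (zset n f y).card := by
  unfold zset
  set Z := Finset.univ.filter (fun p => zpred n f y p = true) with hZ
  by_cases h : Even Z.card
  · simp [h]
  · have hextra : (⟨2 ^ n, by omega⟩ : Fin (2 ^ n + 1)) ∉ Z := by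
      simp [hZ, zpred]
    simp only [if_neg h]
    rw [Finset.card_insert_of_notMem hextra]
    rcases Nat.even_or_odd Z.card with he | ho
    · exact absurd he h
    · rw [Nat.even_add_one]; exact h

lemma mem_zset_iff {n : ℕ} (f : (Fin n → Bool) → (Fin n → Bool) → Bool)
    (x y : Fin n → Bool) : encPipe x ∈ zset n f y ↔ f x y = false := by
  unfold zset
  set Z := Finset.univ.filter (fun p => zpred n f y p = true) with hZ
  have hmemZ : encPipe x ∈ Z ↔ f x y = false := by
    simp [hZ, zpred_encPipe]
  have hne : encPipe x ≠ (⟨2 ^ n, by omega⟩ : Fin (2 ^ n + 1)) := by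
    have := encPipe_lt x
    intro he
    rw [Fin.ext_iff] at he
    simp at he
    omega
  by_cases h : Even Z.card
  · simpa [h] using hmemZ
  · simp only [if_neg h, Finset.mem_insert]
    rw [hmemZ]
    simp [hne]

/-- Alice's matching: tap (vertex 0) is connected to her end of pipe `encPipe x`. -/
def aliceM {n : ℕ} (x : Fin n → Bool) :
    Fin (2 ^ n + 1 + 1) → Option (Fin (2 ^ n + 1 + 1)) := fun k =>
  if k = 0 then some (encPipe x).succ
  else if k = (encPipe x).succ then some 0 else none

lemma aliceM_isPartialMatching {n : ℕ} (x : Fin n → Bool) :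
    IsPartialMatching (aliceM x) := by
  intro i j h
  unfold aliceM at h ⊢
  by_cases hi : i = 0
  · rw [if_pos hi] at h
    injection h with h
    subst h hi
    refine ⟨(Fin.succ_ne_zero _).symm, ?_⟩
    rw [if_neg (Fin.succ_ne_zero _), if_pos rfl]
  · rw [if_neg hi] at h
    by_cases hi2 : i = (encPipe x).succ
    · rw [if_pos hi2] at h
      injection h with h
      subst h hi2
      exact ⟨(Fin.succ_ne_zero _), by rw [if_pos rfl]⟩
    · rw [if_neg hi2] at h; exact absurd h (by simp)

lemma ghStep_exitA {s : ℕ} (a : Fin (s + 1) → Option (Fin (s + 1)))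
    (b : Fin s → Option (Fin s)) : ghStep a b GHState.exitA = GHState.exitA := rfl

lemma ghStep_exitB {s : ℕ} (a : Fin (s + 1) → Option (Fin (s + 1)))
    (b : Fin s → Option (Fin s)) : ghStep a b GHState.exitB = GHState.exitB := rfl

/-- For every Boolean function `f : {0,1}^n × {0,1}^n → {0,1}`, the garden-hose
complexity of `f` is at most `2^n + 1`: there is a garden-hose game with
`2^n + 1` pipes computing `f`. -/
theorem gh_le_two_pow_add_one (n : ℕ)
    (f : (Fin n → Bool) → (Fin n → Bool) → Bool) :
    (∃ G : GHGame n (2 ^ n + 1), G.Computes f) ∧ GH f ≤ 2 ^ n + 1 := by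
  have hex : ∃ G : GHGame n (2 ^ n + 1), G.Computes f := by
    refine ⟨⟨fun x => aliceM x, fun y => finsetMatch (zset n f y) (zset_even n f y),
      fun x => aliceM_isPartialMatching x,
      fun y => finsetMatch_isPartialMatching _ _⟩, ?_⟩
    intro x y
    set s := 2 ^ n + 1 with hs
    set a := aliceM x with ha
    set b := finsetMatch (zset n f y) (zset_even n f y) with hb
    have hstart : ghStart a = GHState.atBob (encPipe x) := by
      unfold ghStart
      have h0 : a 0 = some (encPipe x).succ := by rw [ha]; unfold aliceM; rw [if_pos rfl]
      rw [h0]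
      have htp : toPipe (encPipe x).succ = some (encPipe x) := by
        unfold toPipe
        rw [dif_neg (by simp [Fin.val_succ])]
        simp only [Option.some.injEq]
        apply Fin.ext
        simp [Fin.val_succ]
      simp only [htp]
    show ghResult a b = _
    unfold ghResult
    rw [Function.iterate_add_apply _ (2 * s) 2]
    by_cases hf : f x y
    · -- water exits at Bob
      have hb1 : b (encPipe x) = none := by
        rw [hb]
        exact finsetMatch_none _ (by rw [mem_zset_iff]; simp [hf])
      have h2 : (ghStep a b)^[2] (ghStart a) = GHState.exitB := by
        rw [hstart]
        show ghStep a b (ghStep a b (GHState.atBob (encPipe x))) = _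
        have h1 : ghStep a b (GHState.atBob (encPipe x)) = GHState.exitB := by
          simp only [ghStep, hb1]
        rw [h1, ghStep_exitB]
      rw [h2, Function.iterate_fixed (ghStep_exitB a b)]
      simp [hf]
    · -- water exits at Alice
      have hmem : encPipe x ∈ zset n f y := by
        rw [mem_zset_iff]; simpa using hf
      obtain ⟨u, hu⟩ := finsetMatch_some (zset_even n f y) hmem
      obtain ⟨-, -, hne, -⟩ := finsetMatch_spec (zset_even n f y) hu
      have h2 : (ghStep a b)^[2] (ghStart a) = GHState.exitA := by
        rw [hstart]
        show ghStep a b (ghStep a b (GHState.atBob (encPipe x))) = _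
        have hstep1 : ghStep a b (GHState.atBob (encPipe x)) = GHState.atAlice u := by
          simp only [ghStep, hb, hu]
        rw [hstep1]
        have hau : a u.succ = none := by
          rw [ha]; unfold aliceM
          rw [if_neg (Fin.succ_ne_zero _), if_neg ?_]
          intro he
          exact hne (Fin.succ_injective _ he).symm
        simp only [ghStep, hau]
      rw [h2, Function.iterate_fixed (ghStep_exitA a b)]
      simp [hf]
  exact ⟨hex, Nat.sInf_le hex⟩
end

section
/- Suppose f : {0,1}^n × {0,1}^n → {0,1} admits a deterministic alternating communication protocol of length D, i.e., a protocol in which Alice and Bob alternately send a single bit each (Alice sending first), every sent bit being a function of the sender's input and the transcript so far, such that after D bits the pair (x, transcript) determines f(x,y). Then the garden-hose complexity of f satisfies GH(f) ≤ 2^{D+1} − 1. -/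
/-- The transcript of the first `k` bits of a deterministic alternating
communication protocol in which Alice and Bob alternately send a single bit,
Alice sending first (i.e. on transcripts of even length); each sent bit is a
function of the sender's input and the transcript so far. -/
def transcript {n : ℕ} (A B : (Fin n → Bool) → List Bool → Bool)
    (x y : Fin n → Bool) : ℕ → List Bool
  | 0 => []
  | k + 1 =>
    let t := transcript A B x y k
    t ++ [if t.length % 2 = 0 then A x t else B y t]


/-! Node infrastructure: binary strings as heap-indexed naturals, root `1 = ε`. -/

def nch (m : ℕ) (b : Bool) : ℕ := 2 * m + cond b 1 0
def npar (m : ℕ) : ℕ := m / 2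
def nlast (m : ℕ) : Bool := m % 2 = 1
def nsib (m : ℕ) : ℕ := if m % 2 = 0 then m + 1 else m - 1

def nstr (m : ℕ) : List Bool :=
  if m ≤ 1 then [] else nstr (m / 2) ++ [decide (m % 2 = 1)]
  termination_by m
  decreasing_by exact Nat.div_lt_self (by omega) (by norm_num)

def nlen (m : ℕ) : ℕ := (nstr m).length

lemma nstr_one : nstr 1 = [] := by rw [nstr]; simp

lemma nch_pos (m : ℕ) (b : Bool) (h : 1 ≤ m) : 2 ≤ nch m b := by
  unfold nch; cases b <;> simp <;> omega

lemma npar_nch (m : ℕ) (b : Bool) : npar (nch m b) = m := by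
  unfold nch npar; cases b <;> simp <;> omega

lemma nlast_nch (m : ℕ) (b : Bool) : nlast (nch m b) = b := by
  unfold nch nlast; cases b <;> simp [Nat.add_mul_mod_self_left] <;> omega

lemma nch_npar_nlast (m : ℕ) (h : 2 ≤ m) : nch (npar m) (nlast m) = m := by
  unfold nch npar nlast
  rcases Nat.even_or_odd m with he | ho
  · have : m % 2 = 0 := Nat.even_iff.mp he
    simp [this]; omega
  · have : m % 2 = 1 := Nat.odd_iff.mp ho
    simp [this]; omega

lemma nstr_nch (m : ℕ) (b : Bool) (h : 1 ≤ m) :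
    nstr (nch m b) = nstr m ++ [b] := by
  have h2 : ¬ (nch m b ≤ 1) := by have := nch_pos m b h; omega
  rw [nstr, if_neg h2]
  have hp : nch m b / 2 = m := npar_nch m b
  have hl : decide (nch m b % 2 = 1) = b := nlast_nch m b
  rw [hp, hl]

lemma nlen_nch (m : ℕ) (b : Bool) (h : 1 ≤ m) : nlen (nch m b) = nlen m + 1 := by
  unfold nlen; rw [nstr_nch m b h]; simp

lemma nlen_one : nlen 1 = 0 := by unfold nlen; rw [nstr_one]; rfl

lemma nlen_pos (m : ℕ) (h : 2 ≤ m) : 1 ≤ nlen m := by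
  unfold nlen; rw [nstr]; simp [show ¬ m ≤ 1 by omega]

lemma nlen_npar (m : ℕ) (h : 2 ≤ m) : nlen (npar m) + 1 = nlen m := by
  conv_rhs => rw [← nch_npar_nlast m h]
  rw [nlen_nch]
  have : 1 ≤ m / 2 := by omega
  exact this

lemma npar_pos (m : ℕ) (h : 2 ≤ m) : 1 ≤ npar m := by unfold npar; omega

lemma nsib_eq_nch (m : ℕ) (h : 2 ≤ m) : nsib m = nch (npar m) (!nlast m) := by
  unfold nsib nch npar nlast
  rcases Nat.even_or_odd m with he | ho
  · have : m % 2 = 0 := Nat.even_iff.mp he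
    simp [this]; omega
  · have : m % 2 = 1 := Nat.odd_iff.mp ho
    simp [this]; omega

lemma npar_nsib (m : ℕ) (h : 2 ≤ m) : npar (nsib m) = npar m := by
  rw [nsib_eq_nch m h, npar_nch]

lemma nlast_nsib (m : ℕ) (h : 2 ≤ m) : nlast (nsib m) = ! nlast m := by
  rw [nsib_eq_nch m h, nlast_nch]

lemma nsib_pos (m : ℕ) (h : 2 ≤ m) : 2 ≤ nsib m := by
  rw [nsib_eq_nch m h]; exact nch_pos _ _ (npar_pos m h)

lemma nlen_nsib (m : ℕ) (h : 2 ≤ m) : nlen (nsib m) = nlen m := by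
  rw [nsib_eq_nch m h, nlen_nch _ _ (npar_pos m h), nlen_npar m h]

lemma nsib_nsib (m : ℕ) (h : 2 ≤ m) : nsib (nsib m) = m := by
  have h2 := nsib_pos m h
  rw [nsib_eq_nch (nsib m) h2, npar_nsib m h, nlast_nsib m h, Bool.not_not,
    nch_npar_nlast m h]

lemma nsib_ne (m : ℕ) (h : 2 ≤ m) : nsib m ≠ m := by
  unfold nsib; rcases Nat.even_or_odd m with he | ho
  · have : m % 2 = 0 := Nat.even_iff.mp he; simp [this]
  · have : m % 2 = 1 := Nat.odd_iff.mp ho; simp [this]; omega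

lemma nch_gt (m : ℕ) (b : Bool) (h : 1 ≤ m) : m < nch m b := by
  unfold nch; cases b <;> simp <;> omega

lemma npar_lt (m : ℕ) (h : 2 ≤ m) : npar m < m := by unfold npar; omega

lemma n_lt_pow (m : ℕ) (h : 1 ≤ m) : m < 2 ^ (nlen m + 1) := by
  induction m using Nat.strong_induction_on with
  | _ m ih =>
    by_cases h1 : m ≤ 1
    · have : m = 1 := by omega
      subst this; rw [nlen_one]; norm_num
    · push_neg at h1
      have h2 : 2 ≤ m := h1
      have hp : m / 2 < m := by omega
      have hp1 : 1 ≤ m / 2 := by omega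
      have := ih (m / 2) hp hp1
      have hl : nlen (m / 2) + 1 = nlen m := nlen_npar m h2
      have hpow : 2 ^ (nlen m + 1) = 2 * 2 ^ (nlen (m/2) + 1) := by
        rw [← hl]; ring
      omega

lemma n_ge_pow (m : ℕ) (h : 1 ≤ m) : 2 ^ (nlen m) ≤ m := by
  induction m using Nat.strong_induction_on with
  | _ m ih =>
    by_cases h1 : m ≤ 1
    · have : m = 1 := by omega
      subst this; rw [nlen_one]; norm_num
    · push_neg at h1
      have h2 : 2 ≤ m := h1
      have hp : m / 2 < m := by omega
      have hp1 : 1 ≤ m / 2 := by omega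
      have := ih (m / 2) hp hp1
      have hl : nlen (m / 2) + 1 = nlen m := nlen_npar m h2
      have hpow : 2 ^ (nlen m) = 2 * 2 ^ (nlen (m/2)) := by
        rw [← hl]; ring
      omega

/-- Encode a string as a node. -/
def nnum (t : List Bool) : ℕ := t.foldl nch 1

lemma nnum_nil : nnum [] = 1 := rfl

lemma nnum_append (t : List Bool) (b : Bool) : nnum (t ++ [b]) = nch (nnum t) b := by
  unfold nnum; rw [List.foldl_append]; rfl

lemma nnum_pos (t : List Bool) : 1 ≤ nnum t := by
  induction t using List.reverseRecOn with
  | nil => simp [nnum_nil]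
  | append_singleton t b ih => rw [nnum_append]; have := nch_pos (nnum t) b ih; omega

lemma nstr_nnum (t : List Bool) : nstr (nnum t) = t := by
  induction t using List.reverseRecOn with
  | nil => rw [nnum_nil, nstr_one]
  | append_singleton t b ih =>
      rw [nnum_append, nstr_nch _ _ (nnum_pos t), ih]

lemma nlen_nnum (t : List Bool) : nlen (nnum t) = t.length := by
  unfold nlen; rw [nstr_nnum]

section GHConstr

variable {n : ℕ}

/-- Alice's next bit at node `m`. -/
def abit (A : (Fin n → Bool) → List Bool → Bool) (x : Fin n → Bool) (m : ℕ) : Bool :=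
  A x (nstr m)

/-- Whether the last bit of `m` agrees with Alice's bit at `m`'s parent. -/
def activeA (A : (Fin n → Bool) → List Bool → Bool) (x : Fin n → Bool) (m : ℕ) : Bool :=
  nlast m == A x (nstr (npar m))

def activeB (B : (Fin n → Bool) → List Bool → Bool) (y : Fin n → Bool) (m : ℕ) : Bool :=
  nlast m == B y (nstr (npar m))

/-- `out` evaluated at child `b` of `m`. -/
def oo (out : (Fin n → Bool) → List Bool → Bool) (x : Fin n → Bool) (m : ℕ) (b : Bool) :
    Bool := out x (nstr (nch m b))

def mixed (out : (Fin n → Bool) → List Bool → Bool) (x : Fin n → Bool) (m : ℕ) : Bool :=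
  oo out x m true != oo out x m false

def cbit (out : (Fin n → Bool) → List Bool → Bool) (x : Fin n → Bool) (m : ℕ) : Bool :=
  oo out x m true

lemma mixed_not_both {out} {x : Fin n → Bool} {m : ℕ} (h : mixed out x m = true) :
    ¬ (oo out x m true = true ∧ oo out x m false = true) := by
  unfold mixed at h
  rcases h1 : oo out x m true <;> rcases h2 : oo out x m false <;>
    simp [h1, h2] at h ⊢

lemma cbit_oo {out} {x : Fin n → Bool} {m : ℕ} (h : mixed out x m = true) :
    oo out x m (cbit out x m) = true := by
  unfold mixed at h; unfold cbit
  rcases h1 : oo out x m true <;> rcases h2 : oo out x m false <;>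
    simp [h1, h2] at h ⊢

lemma cbit_unique {out} {x : Fin n → Bool} {m : ℕ} {b : Bool}
    (h : mixed out x m = true) (hb : oo out x m b = true) : b = cbit out x m := by
  unfold mixed at h; unfold cbit
  rcases h1 : oo out x m true <;> rcases h2 : oo out x m false <;> rcases b <;>
    simp [h1, h2] at h hb ⊢

lemma activeA_nch {A} {x : Fin n → Bool} {m : ℕ} (b : Bool) (h : 1 ≤ m) :
    activeA A x (nch m b) = (b == A x (nstr m)) := by
  unfold activeA; rw [nlast_nch, npar_nch]

lemma activeA_nsib {A} {x : Fin n → Bool} {m : ℕ} (h : 2 ≤ m) :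
    activeA A x (nsib m) = ! activeA A x m := by
  unfold activeA; rw [nlast_nsib m h, npar_nsib m h]
  rcases nlast m <;> rcases A x (nstr (npar m)) <;> rfl

lemma activeB_nch {B} {y : Fin n → Bool} {m : ℕ} (b : Bool) (h : 1 ≤ m) :
    activeB B y (nch m b) = (b == B y (nstr m)) := by
  unfold activeB; rw [nlast_nch, npar_nch]

lemma activeB_nsib {B} {y : Fin n → Bool} {m : ℕ} (h : 2 ≤ m) :
    activeB B y (nsib m) = ! activeB B y m := by
  unfold activeB; rw [nlast_nsib m h, npar_nsib m h]
  rcases nlast m <;> rcases B y (nstr (npar m)) <;> rfl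

/-- `out x (nstr m)` as an `oo` at the parent. -/
lemma oo_self {out} {x : Fin n → Bool} {m : ℕ} (h : 2 ≤ m) :
    oo out x (npar m) (nlast m) = out x (nstr m) := by
  unfold oo; rw [nch_npar_nlast m h]

/-- Alice's partner function on nodes. -/
def am (D : ℕ) (A out : (Fin n → Bool) → List Bool → Bool) (x : Fin n → Bool)
    (m : ℕ) : Option ℕ :=
  if D = 0 then
    if out x [] = true then
      if m = 1 then some 2 else if m = 2 then some 1 else none
    else none
  else if D % 2 = 1 then
    if nlen m % 2 = 0 ∧ nlen m + 1 < D then some (nch m (A x (nstr m)))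
    else if nlen m % 2 = 1 ∧ nlen m < D ∧ activeA A x m = true then some (npar m)
    else if nlen m % 2 = 0 ∧ nlen m + 1 = D ∧
        out x (nstr (nch m (A x (nstr m)))) = true then some (nch m (A x (nstr m)))
    else if nlen m = D ∧ activeA A x m = true ∧ out x (nstr m) = true then
      some (npar m)
    else none
  else
    if nlen m % 2 = 0 ∧ nlen m < D then some (nch m (A x (nstr m)))
    else if nlen m % 2 = 1 ∧ nlen m < D ∧ activeA A x m = true then some (npar m)
    else if nlen m % 2 = 1 ∧ nlen m + 1 = D ∧ activeA A x m = false ∧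
        mixed out x (nsib m) = true then
      some (nch (nsib m) (cbit out x (nsib m)))
    else if nlen m = D ∧ activeA A x (npar m) = true ∧
        (oo out x (npar m) true = true ∧ oo out x (npar m) false = true) then
      some (nsib m)
    else if nlen m = D ∧ activeA A x (npar m) = true ∧ mixed out x (npar m) = true ∧
        out x (nstr m) = true then
      some (nsib (npar m))
    else if nlen m = D ∧ activeA A x (npar m) = false ∧
        mixed out x (nsib (npar m)) = true then
      some (nsib m)
    else none

/-- Bob's partner function on nodes. -/
def bm (D : ℕ) (B : (Fin n → Bool) → List Bool → Bool) (y : Fin n → Bool)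
    (m : ℕ) : Option ℕ :=
  if nlen m % 2 = 1 ∧ nlen m < D then some (nch m (B y (nstr m)))
  else if nlen m % 2 = 0 ∧ 1 ≤ nlen m ∧ nlen m ≤ D ∧ activeB B y m = true then
    some (npar m)
  else none

end GHConstr

section GHSpec

variable {n : ℕ} {D : ℕ} {A B out : (Fin n → Bool) → List Bool → Bool}
variable {x y : Fin n → Bool} {m m' : ℕ}

lemma nlen_le_one (h : m ≤ 1) : nlen m = 0 := by
  unfold nlen; rw [nstr, if_pos h]; rfl

lemma two_le_of_nlen (h : 1 ≤ nlen m) : 2 ≤ m := by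
  by_contra hc
  rw [nlen_le_one (by omega)] at h; omega

lemma le_pow_of_nlen_le (h1 : 1 ≤ m) (h2 : nlen m ≤ D) : m ≤ 2 ^ (D + 1) := by
  have hlt := n_lt_pow m h1
  have hle : 2 ^ (nlen m + 1) ≤ 2 ^ (D + 1) :=
    Nat.pow_le_pow_right (by norm_num) (by omega)
  omega

/-! Evaluation lemmas for `am`. -/

lemma am_down (h0 : D ≠ 0) (h1 : nlen m % 2 = 0) (h2 : nlen m + 1 + D % 2 ≤ D) :
    am D A out x m = some (nch m (A x (nstr m))) := by
  unfold am
  rw [if_neg h0]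
  by_cases hp : D % 2 = 1
  · rw [if_pos hp, if_pos ⟨h1, by omega⟩]
  · rw [if_neg hp, if_pos ⟨h1, by omega⟩]

lemma am_up (h0 : D ≠ 0) (h1 : nlen m % 2 = 1) (h2 : nlen m < D)
    (h3 : activeA A x m = true) : am D A out x m = some (npar m) := by
  unfold am
  rw [if_neg h0]
  by_cases hp : D % 2 = 1
  · rw [if_pos hp, if_neg (by rintro ⟨c1, c2⟩; omega), if_pos ⟨h1, h2, h3⟩]
  · rw [if_neg hp, if_neg (by rintro ⟨c1, c2⟩; omega), if_pos ⟨h1, h2, h3⟩]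

lemma am_odd_t_pos (hp : D % 2 = 1) (h1 : nlen m + 1 = D)
    (h3 : out x (nstr (nch m (A x (nstr m)))) = true) :
    am D A out x m = some (nch m (A x (nstr m))) := by
  unfold am
  rw [if_neg (by omega), if_pos hp,
    if_neg (by rintro ⟨c1, c2⟩; omega),
    if_neg (by rintro ⟨c1, c2⟩; omega),
    if_pos ⟨by omega, h1, h3⟩]

lemma am_odd_t_none (hp : D % 2 = 1) (h1 : nlen m + 1 = D)
    (h3 : out x (nstr (nch m (A x (nstr m)))) = false) :
    am D A out x m = none := by
  unfold am
  rw [if_neg (by omega), if_pos hp,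
    if_neg (by rintro ⟨c1, c2⟩; omega),
    if_neg (by rintro ⟨c1, c2⟩; omega),
    if_neg (by rintro ⟨c1, c2, c3⟩; rw [h3] at c3; exact absurd c3 (by simp)),
    if_neg (by rintro ⟨c1, c2⟩; omega)]

lemma am_odd_top (hp : D % 2 = 1) (h1 : nlen m = D) (h2 : activeA A x m = true)
    (h3 : out x (nstr m) = true) : am D A out x m = some (npar m) := by
  unfold am
  rw [if_neg (by omega), if_pos hp,
    if_neg (by rintro ⟨c1, c2⟩; omega),
    if_neg (by rintro ⟨c1, c2, c3⟩; omega),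
    if_neg (by rintro ⟨c1, c2, c3⟩; omega),
    if_pos ⟨h1, h2, h3⟩]

lemma am_e_gadget (hp : D % 2 = 0) (h0 : D ≠ 0) (h1 : nlen m + 1 = D)
    (h2 : activeA A x m = false) (h3 : mixed out x (nsib m) = true) :
    am D A out x m = some (nch (nsib m) (cbit out x (nsib m))) := by
  unfold am
  rw [if_neg h0, if_neg (by omega),
    if_neg (by rintro ⟨c1, c2⟩; omega),
    if_neg (by rintro ⟨c1, c2, c3⟩; rw [h2] at c3; exact absurd c3 (by simp)),
    if_pos ⟨by omega, h1, h2, h3⟩]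

lemma am_e_both (hp : D % 2 = 0) (h0 : D ≠ 0) (h1 : nlen m = D)
    (h2 : activeA A x (npar m) = true) (h3 : oo out x (npar m) true = true)
    (h4 : oo out x (npar m) false = true) :
    am D A out x m = some (nsib m) := by
  unfold am
  rw [if_neg h0, if_neg (by omega),
    if_neg (by rintro ⟨c1, c2⟩; omega),
    if_neg (by rintro ⟨c1, c2⟩; omega),
    if_neg (by rintro ⟨c1, c2⟩; omega),
    if_pos ⟨h1, h2, h3, h4⟩]

lemma am_e_mix (hp : D % 2 = 0) (h0 : D ≠ 0) (h1 : nlen m = D)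
    (h2 : activeA A x (npar m) = true) (h3 : mixed out x (npar m) = true)
    (h4 : out x (nstr m) = true) :
    am D A out x m = some (nsib (npar m)) := by
  unfold am
  rw [if_neg h0, if_neg (by omega),
    if_neg (by rintro ⟨c1, c2⟩; omega),
    if_neg (by rintro ⟨c1, c2⟩; omega),
    if_neg (by rintro ⟨c1, c2⟩; omega),
    if_neg (by rintro ⟨c1, c2, c3⟩; exact mixed_not_both h3 c3),
    if_pos ⟨h1, h2, h3, h4⟩]

lemma am_e_dead (hp : D % 2 = 0) (h0 : D ≠ 0) (h1 : nlen m = D)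
    (h2 : activeA A x (npar m) = false) (h3 : mixed out x (nsib (npar m)) = true) :
    am D A out x m = some (nsib m) := by
  unfold am
  rw [if_neg h0, if_neg (by omega),
    if_neg (by rintro ⟨c1, c2⟩; omega),
    if_neg (by rintro ⟨c1, c2⟩; omega),
    if_neg (by rintro ⟨c1, c2⟩; omega),
    if_neg (by rintro ⟨c1, c2, c3⟩; rw [h2] at c2; exact absurd c2 (by simp)),
    if_neg (by rintro ⟨c1, c2, c3⟩; rw [h2] at c2; exact absurd c2 (by simp)),
    if_pos ⟨h1, h2, h3⟩]

lemma am_e_top_none (hp : D % 2 = 0) (h0 : D ≠ 0) (hm : 2 ≤ m) (h1 : nlen m = D)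
    (h2 : activeA A x (npar m) = true) (h4 : out x (nstr m) = false) :
    am D A out x m = none := by
  have hself : oo out x (npar m) (nlast m) = out x (nstr m) := oo_self hm
  unfold am
  rw [if_neg h0, if_neg (by omega),
    if_neg (by rintro ⟨c1, c2⟩; omega),
    if_neg (by rintro ⟨c1, c2⟩; omega),
    if_neg (by rintro ⟨c1, c2⟩; omega),
    if_neg ?_,
    if_neg (by rintro ⟨c1, c2, c3, c4⟩; rw [h4] at c4; exact absurd c4 (by simp)),
    if_neg (by rintro ⟨c1, c2, c3⟩; rw [h2] at c2; exact absurd c2 (by simp))]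
  rintro ⟨c1, c2, c3, c4⟩
  rw [h4] at hself
  cases hl : nlast m
  · rw [hl] at hself; rw [hself] at c4; exact absurd c4 (by simp)
  · rw [hl] at hself; rw [hself] at c3; exact absurd c3 (by simp)

/-! Evaluation lemmas for `bm`. -/

lemma bm_down (h1 : nlen m % 2 = 1) (h2 : nlen m < D) :
    bm D B y m = some (nch m (B y (nstr m))) := by
  unfold bm; rw [if_pos ⟨h1, h2⟩]

lemma bm_none_odd (h1 : nlen m % 2 = 1) (h2 : D ≤ nlen m) : bm D B y m = none := by
  unfold bm
  rw [if_neg (by rintro ⟨c1, c2⟩; omega), if_neg (by rintro ⟨c1, c2⟩; omega)]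

lemma bm_none_inactive (h1 : nlen m % 2 = 0) (h2 : activeB B y m = false) :
    bm D B y m = none := by
  unfold bm
  rw [if_neg (by rintro ⟨c1, c2⟩; omega),
    if_neg (by rintro ⟨c1, c2, c3, c4⟩; rw [h2] at c4; exact absurd c4 (by simp))]

theorem bm_symm (hm : 1 ≤ m) (h : bm D B y m = some m') :
    1 ≤ m' ∧ m' ≤ 2 ^ (D + 1) ∧ m' ≠ m ∧ bm D B y m' = some m := by
  unfold bm at h
  split_ifs at h with g1 g2
  · obtain rfl : m' = nch m (B y (nstr m)) := by exact (Option.some.inj h).symm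
    have hl : nlen (nch m (B y (nstr m))) = nlen m + 1 := nlen_nch m _ hm
    have hpos : 2 ≤ nch m (B y (nstr m)) := nch_pos m _ hm
    refine ⟨by omega, le_pow_of_nlen_le (by omega) (by omega), ?_, ?_⟩
    · have := nch_gt m (B y (nstr m)) hm; omega
    · unfold bm
      rw [if_neg (by rintro ⟨c1, c2⟩; omega),
        if_pos ⟨by omega, by omega, by omega, by
          rw [activeB_nch _ hm]; simp⟩, npar_nch]
  · obtain rfl : m' = npar m := by exact (Option.some.inj h).symm
    obtain ⟨c1, c2, c3, c4⟩ := g2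
    have hm2 : 2 ≤ m := two_le_of_nlen (by omega)
    have hl : nlen (npar m) + 1 = nlen m := nlen_npar m hm2
    refine ⟨npar_pos m hm2, le_pow_of_nlen_le (npar_pos m hm2) (by omega), ?_, ?_⟩
    · have := npar_lt m hm2; omega
    · rw [bm_down (by omega) (by omega)]
      have hb : nlast m = B y (nstr (npar m)) := eq_of_beq c4
      rw [← hb, nch_npar_nlast m hm2]

end GHSpec

section AmSymm

variable {n : ℕ} {D : ℕ} {A B out : (Fin n → Bool) → List Bool → Bool}
variable {x : Fin n → Bool} {m m' : ℕ}

theorem am_symm (hm : 1 ≤ m) (h : am D A out x m = some m') :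
    1 ≤ m' ∧ m' ≤ 2 ^ (D + 1) ∧ m' ≠ m ∧ am D A out x m' = some m := by
  by_cases h0 : D = 0
  · subst h0
    unfold am at h ⊢
    rw [if_pos rfl] at h ⊢
    by_cases ho : out x [] = true
    · rw [if_pos ho] at h ⊢
      by_cases hm1 : m = 1
      · rw [if_pos hm1] at h
        obtain rfl : m' = 2 := (Option.some.inj h).symm
        refine ⟨by omega, by norm_num, by omega, ?_⟩
        rw [if_neg (by omega), if_pos rfl, hm1]
      · rw [if_neg hm1] at h
        by_cases hm2 : m = 2
        · rw [if_pos hm2] at h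
          obtain rfl : m' = 1 := (Option.some.inj h).symm
          refine ⟨by omega, by norm_num, by omega, ?_⟩
          rw [if_pos rfl, hm2]
        · rw [if_neg hm2] at h; exact absurd h (by simp)
    · rw [if_neg ho] at h; exact absurd h (by simp)
  · by_cases hp : D % 2 = 1
    · -- odd D
      unfold am at h
      rw [if_neg h0, if_pos hp] at h
      split_ifs at h with g1 g2 g3 g4
      · -- d1 : down edge
        obtain rfl : m' = nch m (A x (nstr m)) := (Option.some.inj h).symm
        have hl : nlen (nch m (A x (nstr m))) = nlen m + 1 := nlen_nch m _ hm
        have hpos : 2 ≤ nch m (A x (nstr m)) := nch_pos m _ hm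
        refine ⟨by omega, le_pow_of_nlen_le (by omega) (by omega), ?_, ?_⟩
        · have := nch_gt m (A x (nstr m)) hm; omega
        · rw [am_up h0 (by omega) (by omega)
            (by rw [activeA_nch _ hm]; simp), npar_nch]
      · -- d2 : up edge
        obtain rfl : m' = npar m := (Option.some.inj h).symm
        obtain ⟨c1, c2, c3⟩ := g2
        have hm2 : 2 ≤ m := two_le_of_nlen (by omega)
        have hl : nlen (npar m) + 1 = nlen m := nlen_npar m hm2
        refine ⟨npar_pos m hm2, le_pow_of_nlen_le (npar_pos m hm2) (by omega),
          ?_, ?_⟩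
        · have := npar_lt m hm2; omega
        · rw [am_down h0 (by omega) (by omega)]
          have hb : nlast m = A x (nstr (npar m)) := eq_of_beq c3
          rw [← hb, nch_npar_nlast m hm2]
      · -- d3 : terminal down edge
        obtain rfl : m' = nch m (A x (nstr m)) := (Option.some.inj h).symm
        obtain ⟨c1, c2, c3⟩ := g3
        have hl : nlen (nch m (A x (nstr m))) = nlen m + 1 := nlen_nch m _ hm
        have hpos : 2 ≤ nch m (A x (nstr m)) := nch_pos m _ hm
        refine ⟨by omega, le_pow_of_nlen_le (by omega) (by omega), ?_, ?_⟩
        · have := nch_gt m (A x (nstr m)) hm; omega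
        · rw [am_odd_top hp (by omega) (by rw [activeA_nch _ hm]; simp) c3,
            npar_nch]
      · -- d4 : terminal up edge
        obtain rfl : m' = npar m := (Option.some.inj h).symm
        obtain ⟨c1, c2, c3⟩ := g4
        have hm2 : 2 ≤ m := two_le_of_nlen (by omega)
        have hl : nlen (npar m) + 1 = nlen m := nlen_npar m hm2
        have hb : nlast m = A x (nstr (npar m)) := eq_of_beq c2
        have hself : nch (npar m) (A x (nstr (npar m))) = m := by
          rw [← hb, nch_npar_nlast m hm2]
        refine ⟨npar_pos m hm2, le_pow_of_nlen_le (npar_pos m hm2) (by omega),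
          ?_, ?_⟩
        · have := npar_lt m hm2; omega
        · rw [am_odd_t_pos hp (by omega) (by rw [hself]; exact c3), hself]
    · -- even D
      have hp2 : D % 2 = 0 := by omega
      unfold am at h
      rw [if_neg h0, if_neg hp] at h
      split_ifs at h with g1 g2 g3 g4 g5 g6
      · -- c1 : down edge
        obtain rfl : m' = nch m (A x (nstr m)) := (Option.some.inj h).symm
        obtain ⟨c1, c2⟩ := g1
        have hl : nlen (nch m (A x (nstr m))) = nlen m + 1 := nlen_nch m _ hm
        have hpos : 2 ≤ nch m (A x (nstr m)) := nch_pos m _ hm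
        refine ⟨by omega, le_pow_of_nlen_le (by omega) (by omega), ?_, ?_⟩
        · have := nch_gt m (A x (nstr m)) hm; omega
        · rw [am_up h0 (by omega) (by omega)
            (by rw [activeA_nch _ hm]; simp), npar_nch]
      · -- c2 : up edge
        obtain rfl : m' = npar m := (Option.some.inj h).symm
        obtain ⟨c1, c2, c3⟩ := g2
        have hm2 : 2 ≤ m := two_le_of_nlen (by omega)
        have hl : nlen (npar m) + 1 = nlen m := nlen_npar m hm2
        refine ⟨npar_pos m hm2, le_pow_of_nlen_le (npar_pos m hm2) (by omega),
          ?_, ?_⟩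
        · have := npar_lt m hm2; omega
        · rw [am_down h0 (by omega) (by omega)]
          have hb : nlast m = A x (nstr (npar m)) := eq_of_beq c3
          rw [← hb, nch_npar_nlast m hm2]
      · -- c3 : gadget edge, from the inactive node at level D-1
        obtain rfl : m' = nch (nsib m) (cbit out x (nsib m)) := (Option.some.inj h).symm
        obtain ⟨c1, c2, c3, c4⟩ := g3
        have hm2 : 2 ≤ m := two_le_of_nlen (by omega)
        have hs2 : 2 ≤ nsib m := nsib_pos m hm2
        have hls : nlen (nsib m) = nlen m := nlen_nsib m hm2
        have hl : nlen (nch (nsib m) (cbit out x (nsib m))) = nlen m + 1 := by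
          rw [nlen_nch _ _ (by omega), hls]
        have hpos : 2 ≤ nch (nsib m) (cbit out x (nsib m)) := nch_pos _ _ (by omega)
        refine ⟨by omega, le_pow_of_nlen_le (by omega) (by omega),
          by intro he; rw [he] at hl; omega, ?_⟩
        have hpar : npar (nch (nsib m) (cbit out x (nsib m))) = nsib m := npar_nch _ _
        have hact : activeA A x (npar (nch (nsib m) (cbit out x (nsib m)))) = true := by
          rw [hpar, activeA_nsib hm2, c3]; rfl
        have hout : out x (nstr (nch (nsib m) (cbit out x (nsib m)))) = true :=
          cbit_oo c4
        rw [am_e_mix hp2 h0 (by omega) hact (by rw [hpar]; exact c4) hout, hpar,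
          nsib_nsib m hm2]
      · -- c4 : both-ones sibling edge at level D
        obtain rfl : m' = nsib m := (Option.some.inj h).symm
        obtain ⟨c1, c2, c3⟩ := g4
        have hm2 : 2 ≤ m := two_le_of_nlen (by omega)
        have hls : nlen (nsib m) = nlen m := nlen_nsib m hm2
        have hpar : npar (nsib m) = npar m := npar_nsib m hm2
        have hsp := nsib_pos m hm2
        refine ⟨by omega, le_pow_of_nlen_le (by omega) (by omega),
          nsib_ne m hm2, ?_⟩
        rw [am_e_both hp2 h0 (by omega) (by rw [hpar]; exact c2)
          (by rw [hpar]; exact c3.1) (by rw [hpar]; exact c3.2), nsib_nsib m hm2]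
      · -- c5 : mixed edge from level D to the dead sibling at level D-1
        obtain rfl : m' = nsib (npar m) := (Option.some.inj h).symm
        obtain ⟨c1, c2, c3, c4⟩ := g5
        have hm2 : 2 ≤ m := two_le_of_nlen (by omega)
        have hlp : nlen (npar m) + 1 = nlen m := nlen_npar m hm2
        have hq2 : 2 ≤ npar m := two_le_of_nlen (by omega)
        have hls : nlen (nsib (npar m)) = nlen (npar m) := nlen_nsib _ hq2
        have hact : activeA A x (nsib (npar m)) = false := by
          rw [activeA_nsib hq2, c2]; rfl
        have hmix : mixed out x (nsib (nsib (npar m))) = true := by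
          rw [nsib_nsib _ hq2]; exact c3
        have hb : nlast m = cbit out x (npar m) :=
          cbit_unique c3 (by rw [oo_self hm2]; exact c4)
        refine ⟨by have := nsib_pos _ hq2; omega,
          le_pow_of_nlen_le (by have := nsib_pos _ hq2; omega) (by omega),
          by intro he; rw [he] at hls; omega, ?_⟩
        rw [am_e_gadget hp2 h0 (by omega) hact hmix, nsib_nsib _ hq2, ← hb,
          nch_npar_nlast m hm2]
      · -- c6 : dead-subtree sibling edge at level D
        obtain rfl : m' = nsib m := (Option.some.inj h).symm
        obtain ⟨c1, c2, c3⟩ := g6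
        have hm2 : 2 ≤ m := two_le_of_nlen (by omega)
        have hls : nlen (nsib m) = nlen m := nlen_nsib m hm2
        have hpar : npar (nsib m) = npar m := npar_nsib m hm2
        have hsp := nsib_pos m hm2
        refine ⟨by omega, le_pow_of_nlen_le (by omega) (by omega),
          nsib_ne m hm2, ?_⟩
        rw [am_e_dead hp2 h0 (by omega) (by rw [hpar]; exact c2)
          (by rw [hpar]; exact c3), nsib_nsib m hm2]

end AmSymm

section GameDef

variable {n : ℕ}

/-- Alice's matching on vertices: vertex `k` is node `k + 1` (vertex `0` = tap = `ε`). -/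
def mkEA (D : ℕ) (A out : (Fin n → Bool) → List Bool → Bool) (x : Fin n → Bool)
    {s : ℕ} : Fin (s + 1) → Option (Fin (s + 1)) := fun k =>
  match am D A out x (k.val + 1) with
  | none => none
  | some m' => if h : m' - 1 < s + 1 then some ⟨m' - 1, h⟩ else none

/-- Bob's matching on pipes: pipe `i` is node `i + 2`. -/
def mkEB (D : ℕ) (B : (Fin n → Bool) → List Bool → Bool) (y : Fin n → Bool)
    {s : ℕ} : Fin s → Option (Fin s) := fun i =>
  match bm D B y (i.val + 2) with
  | none => none
  | some m' => if h : m' - 2 < s then some ⟨m' - 2, h⟩ else none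

theorem mkEA_matching (D : ℕ) (A out : (Fin n → Bool) → List Bool → Bool)
    (x : Fin n → Bool) {s : ℕ} : IsPartialMatching (mkEA D A out x (s := s)) := by
  intro i j hij
  unfold mkEA at hij
  rcases ham : am D A out x (i.val + 1) with _ | m'
  · rw [ham] at hij; exact absurd hij (by simp)
  · simp only [ham] at hij
    by_cases hr : m' - 1 < s + 1
    · rw [dif_pos hr] at hij
      obtain rfl : j = ⟨m' - 1, hr⟩ := (Option.some.inj hij).symm
      obtain ⟨h1, h2, h3, h4⟩ := am_symm (by omega) ham
      constructor
      · intro he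
        have : (i : ℕ) = m' - 1 := by rw [he]
        omega
      · unfold mkEA
        have hj : ((⟨m' - 1, hr⟩ : Fin (s + 1)) : ℕ) + 1 = m' := by simp; omega
        rw [hj]
        simp only [h4]
        simp; omega
    · rw [dif_neg hr] at hij; exact absurd hij (by simp)

theorem mkEB_matching (D : ℕ) (B : (Fin n → Bool) → List Bool → Bool)
    (y : Fin n → Bool) {s : ℕ} : IsPartialMatching (mkEB D B y (s := s)) := by
  intro i j hij
  unfold mkEB at hij
  rcases hbm : bm D B y (i.val + 2) with _ | m'
  · rw [hbm] at hij; exact absurd hij (by simp)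
  · simp only [hbm] at hij
    by_cases hr : m' - 2 < s
    · rw [dif_pos hr] at hij
      obtain rfl : j = ⟨m' - 2, hr⟩ := (Option.some.inj hij).symm
      obtain ⟨h1, h2, h3, h4⟩ := bm_symm (by omega) hbm
      have h2' : 2 ≤ m' := by
        -- partners of Bob vertices are Bob vertices (≥ 2): from h4, a `bm _ = some _`
        by_contra hc
        -- m' ≤ 1: then node m' has nlen 0, so both branches of `bm` at m' fail
        have hl : nlen m' = 0 := nlen_le_one (by omega)
        unfold bm at h4
        rw [if_neg (by rintro ⟨c1, c2⟩; omega),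
          if_neg (by rintro ⟨c1, c2, c3⟩; omega)] at h4
        exact absurd h4 (by simp)
      constructor
      · intro he
        have : (i : ℕ) = m' - 2 := by rw [he]
        omega
      · unfold mkEB
        have hj : ((⟨m' - 2, hr⟩ : Fin s) : ℕ) + 2 = m' := by simp; omega
        rw [hj]
        simp only [h4]
        simp
    · rw [dif_neg hr] at hij; exact absurd hij (by simp)

end GameDef

section Flow

variable {n : ℕ} {D : ℕ} {A B out : (Fin n → Bool) → List Bool → Bool}
variable {x y : Fin n → Bool}

lemma transcript_length (k : ℕ) : (transcript A B x y k).length = k := by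
  induction k with
  | zero => rfl
  | succ k ih => simp [transcript, ih]

lemma transcript_succ (k : ℕ) :
    transcript A B x y (k + 1) = transcript A B x y k ++
      [if k % 2 = 0 then A x (transcript A B x y k) else B y (transcript A B x y k)] := by
  simp [transcript, transcript_length]

/-- The node of the length-`k` transcript. -/
def tnode (A B : (Fin n → Bool) → List Bool → Bool) (x y : Fin n → Bool) (k : ℕ) : ℕ :=
  nnum (transcript A B x y k)

lemma tnode_zero : tnode A B x y 0 = 1 := rfl

lemma nstr_tnode (k : ℕ) : nstr (tnode A B x y k) = transcript A B x y k :=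
  nstr_nnum _

lemma tnode_pos (k : ℕ) : 1 ≤ tnode A B x y k := nnum_pos _

lemma nlen_tnode (k : ℕ) : nlen (tnode A B x y k) = k := by
  unfold tnode; rw [nlen_nnum, transcript_length]

lemma tnode_succ (k : ℕ) :
    tnode A B x y (k + 1) = nch (tnode A B x y k)
      (if k % 2 = 0 then A x (transcript A B x y k) else B y (transcript A B x y k)) := by
  unfold tnode; rw [transcript_succ, nnum_append]

lemma tnode_succ_even (k : ℕ) (hk : k % 2 = 0) :
    tnode A B x y (k + 1) = nch (tnode A B x y k) (A x (transcript A B x y k)) := by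
  rw [tnode_succ, if_pos hk]

lemma tnode_succ_odd (k : ℕ) (hk : k % 2 = 1) :
    tnode A B x y (k + 1) = nch (tnode A B x y k) (B y (transcript A B x y k)) := by
  rw [tnode_succ, if_neg (by omega)]

lemma tnode_two_le (k : ℕ) (hk : 1 ≤ k) : 2 ≤ tnode A B x y k :=
  two_le_of_nlen (by rw [nlen_tnode]; omega)

lemma npar_tnode (k : ℕ) : npar (tnode A B x y (k + 1)) = tnode A B x y k := by
  rw [tnode_succ, npar_nch]

lemma nlast_tnode (k : ℕ) :
    nlast (tnode A B x y (k + 1)) =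
      (if k % 2 = 0 then A x (transcript A B x y k) else B y (transcript A B x y k)) := by
  rw [tnode_succ, nlast_nch]

lemma activeA_tnode (k : ℕ) (hk : k % 2 = 0) :
    activeA A x (tnode A B x y (k + 1)) = true := by
  rw [tnode_succ_even k hk, activeA_nch _ (tnode_pos k), nstr_tnode]
  simp

lemma activeB_tnode (k : ℕ) (hk : k % 2 = 1) :
    activeB B y (tnode A B x y (k + 1)) = true := by
  rw [tnode_succ_odd k hk, activeB_nch _ (tnode_pos k), nstr_tnode]
  simp

variable {s : ℕ}

/-- Step lemma: water at Alice's end of pipe of node `m`, Alice's edge to node `m'`. -/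
lemma step_alice {m m' : ℕ} (hm : 2 ≤ m) (hms : m ≤ s + 1) (hm' : 2 ≤ m') (hm's : m' ≤ s + 1)
    (ham : am D A out x m = some m') (hp : m - 2 < s) (hp' : m' - 2 < s) :
    ghStep (mkEA D A out x) (mkEB D B y) (GHState.atAlice ⟨m - 2, hp⟩) =
      GHState.atBob ⟨m' - 2, hp'⟩ := by
  have ha : mkEA D A out x (Fin.succ ⟨m - 2, hp⟩) = some ⟨m' - 1, by omega⟩ := by
    unfold mkEA
    have harg : ((Fin.succ (⟨m - 2, hp⟩ : Fin s)) : ℕ) + 1 = m := by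
      rw [Fin.val_succ]
      show m - 2 + 1 + 1 = m
      omega
    rw [harg]
    simp only [ham]
    rw [dif_pos (by omega : m' - 1 < s + 1)]
  have ht : toPipe (⟨m' - 1, by omega⟩ : Fin (s + 1)) = some ⟨m' - 2, hp'⟩ := by
    unfold toPipe
    rw [dif_neg (by show ¬ (m' - 1 = 0); omega)]
    congr 1
  simp only [ghStep, ha, ht]

lemma step_alice_exit {m : ℕ} (hm : 2 ≤ m) (hms : m ≤ s + 1)
    (ham : am D A out x m = none) (hp : m - 2 < s) :
    ghStep (mkEA D A out x) (mkEB D B y) (GHState.atAlice ⟨m - 2, hp⟩) =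
      GHState.exitA := by
  have ha : mkEA D A out x (Fin.succ ⟨m - 2, hp⟩) = none := by
    unfold mkEA
    have harg : ((Fin.succ (⟨m - 2, hp⟩ : Fin s)) : ℕ) + 1 = m := by
      rw [Fin.val_succ]
      show m - 2 + 1 + 1 = m
      omega
    rw [harg]
    simp only [ham]
  simp only [ghStep, ha]

lemma step_bob {m m' : ℕ} (hm : 2 ≤ m) (hms : m ≤ s + 1) (hm' : 2 ≤ m') (hm's : m' ≤ s + 1)
    (hbm : bm D B y m = some m') (hp : m - 2 < s) (hp' : m' - 2 < s) :
    ghStep (mkEA D A out x) (mkEB D B y) (GHState.atBob ⟨m - 2, hp⟩) =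
      GHState.atAlice ⟨m' - 2, hp'⟩ := by
  have hb : mkEB D B y (⟨m - 2, hp⟩ : Fin s) = some ⟨m' - 2, hp'⟩ := by
    unfold mkEB
    have harg : ((⟨m - 2, hp⟩ : Fin s) : ℕ) + 2 = m := by
      show m - 2 + 2 = m
      omega
    rw [harg]
    simp only [hbm]
    rw [dif_pos hp']
  simp only [ghStep, hb]

lemma step_bob_exit {m : ℕ} (hm : 2 ≤ m) (hms : m ≤ s + 1)
    (hbm : bm D B y m = none) (hp : m - 2 < s) :
    ghStep (mkEA D A out x) (mkEB D B y) (GHState.atBob ⟨m - 2, hp⟩) =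
      GHState.exitB := by
  have hb : mkEB D B y (⟨m - 2, hp⟩ : Fin s) = none := by
    unfold mkEB
    have harg : ((⟨m - 2, hp⟩ : Fin s) : ℕ) + 2 = m := by
      show m - 2 + 2 = m
      omega
    rw [harg]
    simp only [hbm]
  simp only [ghStep, hb]

lemma start_step {m' : ℕ} (hm' : 2 ≤ m') (hm's : m' ≤ s + 1)
    (ham : am D A out x 1 = some m') (hp' : m' - 2 < s) :
    ghStart (mkEA D A out x (s := s)) = GHState.atBob ⟨m' - 2, hp'⟩ := by
  have ha : mkEA D A out x (0 : Fin (s + 1)) = some ⟨m' - 1, by omega⟩ := by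
    unfold mkEA
    have harg : ((0 : Fin (s + 1)) : ℕ) + 1 = 1 := by simp
    rw [harg]
    simp only [ham]
    rw [dif_pos (by omega : m' - 1 < s + 1)]
  have ht : toPipe (⟨m' - 1, by omega⟩ : Fin (s + 1)) = some ⟨m' - 2, hp'⟩ := by
    unfold toPipe
    rw [dif_neg (by show ¬ (m' - 1 = 0); omega)]
    congr 1
  simp only [ghStart, ha, ht]

lemma start_exit (ham : am D A out x 1 = none) :
    ghStart (mkEA D A out x (s := s)) = GHState.exitA := by
  have ha : mkEA D A out x (0 : Fin (s + 1)) = none := by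
    unfold mkEA
    have harg : ((0 : Fin (s + 1)) : ℕ) + 1 = 1 := by simp
    rw [harg]
    simp only [ham]
  simp only [ghStart, ha]

end Flow

section Main

variable {n : ℕ} {D : ℕ} {A B out : (Fin n → Bool) → List Bool → Bool}
variable {x y : Fin n → Bool} {s : ℕ}

lemma mixed_of {t : ℕ} {c : Bool}
    (hno : ¬ (oo out x t true = true ∧ oo out x t false = true))
    (hb : oo out x t c = true) : mixed out x t = true := by
  unfold mixed
  cases c <;> rcases h1 : oo out x t true <;> rcases h2 : oo out x t false <;>
    simp_all

lemma tpipe_lt (hs : s + 1 = 2 ^ (D + 1)) {k : ℕ} (hk1 : 1 ≤ k) (hk : k ≤ D) :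
    tnode A B x y k - 2 < s := by
  have h1 := n_lt_pow (tnode A B x y k) (tnode_pos k)
  rw [nlen_tnode] at h1
  have h2 : 2 ^ (k + 1) ≤ 2 ^ (D + 1) :=
    Nat.pow_le_pow_right (by norm_num) (by omega)
  have h3 : (4 : ℕ) ≤ 2 ^ (D + 1) := by
    calc (4 : ℕ) = 2 ^ 2 := rfl
    _ ≤ 2 ^ (D + 1) := Nat.pow_le_pow_right (by norm_num) (by omega)
  omega

lemma tnode_le (hs : s + 1 = 2 ^ (D + 1)) {k : ℕ} (hk : k ≤ D) :
    tnode A B x y k ≤ s + 1 := by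
  rw [hs]
  exact le_pow_of_nlen_le (tnode_pos k) (by rw [nlen_tnode]; omega)

theorem flow (hs : s + 1 = 2 ^ (D + 1)) :
    ∀ k, ∀ _ : 1 ≤ k, ∀ _ : k + D % 2 ≤ D,
    (ghStep (mkEA D A out x) (mkEB D B y))^[k - 1]
        (ghStart (mkEA D A out x (s := s))) =
      if k % 2 = 1 then
        GHState.atBob ⟨tnode A B x y k - 2, by apply tpipe_lt hs <;> omega⟩
      else
        GHState.atAlice ⟨tnode A B x y k - 2, by apply tpipe_lt hs <;> omega⟩ := by
  intro k
  induction k with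
  | zero => intro h1 _; exact absurd h1 (by omega)
  | succ k ih =>
    intro hk1 hcond
    by_cases hk0 : k = 0
    · subst hk0
      have hD0 : D ≠ 0 := by omega
      have ham : am D A out x 1 = some (tnode A B x y 1) := by
        have := am_down (A := A) (out := out) (x := x) (m := 1) hD0
          (by rw [nlen_one]) (by rw [nlen_one]; omega)
        rw [this]
        congr 1
        rw [tnode_succ_even 0 (by norm_num), tnode_zero, nstr_one]
        rfl
      rw [if_pos (by norm_num)]
      simp only [Nat.sub_self, Function.iterate_zero, id]
      exact start_step (tnode_two_le 1 (by norm_num)) (tnode_le hs (by omega)) ham _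
    · have hk1' : 1 ≤ k := by omega
      have ih' := ih hk1' (by omega)
      have hiter : k + 1 - 1 = (k - 1) + 1 := by omega
      rw [hiter, Function.iterate_succ_apply', ih']
      by_cases hk2 : k % 2 = 1
      · -- Bob's move
        rw [if_pos hk2, if_neg (by omega)]
        have hbm : bm D B y (tnode A B x y k) = some (tnode A B x y (k + 1)) := by
          rw [bm_down (by rw [nlen_tnode]; omega) (by rw [nlen_tnode]; omega)]
          rw [nstr_tnode, ← tnode_succ_odd k hk2]
        exact step_bob (tnode_two_le k hk1') (tnode_le hs (by omega))
          (tnode_two_le (k+1) (by omega)) (tnode_le hs (by omega)) hbm _ _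
      · -- Alice's move
        rw [if_neg hk2, if_pos (by omega)]
        have ham : am D A out x (tnode A B x y k) = some (tnode A B x y (k + 1)) := by
          rw [am_down (by omega) (by rw [nlen_tnode]; omega)
            (by rw [nlen_tnode]; omega)]
          rw [nstr_tnode, ← tnode_succ_even k (by omega)]
        exact step_alice (tnode_two_le k hk1') (tnode_le hs (by omega))
          (tnode_two_le (k+1) (by omega)) (tnode_le hs (by omega)) ham _ _

lemma result_of_iterate {a : Fin (s+1) → Option (Fin (s+1))} {b : Fin s → Option (Fin s)}
    {N : ℕ} (hN : N ≤ 2 * s + 2) {e : GHState s}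
    (he : ghStep a b e = e) (h : (ghStep a b)^[N] (ghStart a) = e) :
    ghResult a b = e := by
  unfold ghResult
  rw [show 2 * s + 2 = (2 * s + 2 - N) + N by omega, Function.iterate_add_apply, h]
  exact Function.iterate_fixed he _

lemma iterate_chain {α : Type*} (F : α → α) (i : ℕ) {z u v : α}
    (h1 : F^[i] z = u) (h2 : F u = v) : F^[i + 1] z = v := by
  rw [Function.iterate_succ_apply', h1, h2]

theorem result_eq (hs : s + 1 = 2 ^ (D + 1)) :
    ghResult (mkEA D A out x (s := s)) (mkEB D B y) =
      if out x (transcript A B x y D) = true then GHState.exitB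
      else GHState.exitA := by
  have hDlt : D < 2 ^ D := Nat.lt_two_pow_self
  have hpow : 2 ^ (D + 1) = 2 * 2 ^ D := by ring
  have heA : ghStep (mkEA D A out x (s := s)) (mkEB D B y) GHState.exitA =
      GHState.exitA := rfl
  have heB : ghStep (mkEA D A out x (s := s)) (mkEB D B y) GHState.exitB =
      GHState.exitB := rfl
  by_cases hD0 : D = 0
  · subst hD0
    have hs1 : s = 1 := by simpa using hs
    by_cases ho : out x [] = true
    · rw [show transcript A B x y 0 = [] from rfl, if_pos ho]
      have ham : am 0 A out x 1 = some 2 := by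
        unfold am; rw [if_pos rfl, if_pos ho, if_pos rfl]
      have hst : ghStart (mkEA 0 A out x (s := s)) =
          GHState.atBob ⟨0, by omega⟩ := by
        have := start_step (s := s) (le_refl 2) (by omega) ham (by omega)
        simpa using this
      apply result_of_iterate (N := 1) (by omega) heB
      rw [Function.iterate_one, hst]
      have hn2 : nlen 2 = 1 := by
        rw [show (2 : ℕ) = nch 1 false from rfl, nlen_nch 1 false (le_refl 1),
          nlen_one]
      have hbm : bm 0 B y 2 = none := bm_none_odd (by rw [hn2]) (by omega)
      have := step_bob_exit (A := A) (out := out) (x := x) (le_refl 2)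
        (by omega) hbm (by omega : 2 - 2 < s)
      simpa using this
    · rw [show transcript A B x y 0 = [] from rfl, if_neg ho]
      have ham : am 0 A out x 1 = none := by
        unfold am; rw [if_pos rfl, if_neg ho]
      apply result_of_iterate (N := 0) (by omega) heA
      rw [Function.iterate_zero, id]
      exact start_exit ham
  · by_cases hp : D % 2 = 1
    · -- D odd
      by_cases hD1 : D = 1
      · subst hD1
        have hch : nch 1 (A x (nstr 1)) = tnode A B x y 1 := by
          rw [tnode_succ_even 0 (by norm_num), tnode_zero, nstr_one]; rfl
        by_cases hf : out x (transcript A B x y 1) = true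
        · rw [if_pos hf]
          have ham : am 1 A out x 1 = some (tnode A B x y 1) := by
            rw [am_odd_t_pos hp (by rw [nlen_one])
              (by rw [hch, nstr_tnode]; exact hf), hch]
          apply result_of_iterate (N := 1) (by omega) heB
          rw [Function.iterate_one,
            start_step (tnode_two_le 1 (by norm_num)) (tnode_le hs (by omega)) ham
              (tpipe_lt hs (by norm_num) (by norm_num))]
          exact step_bob_exit (tnode_two_le 1 (by norm_num)) (tnode_le hs (by omega))
            (bm_none_odd (by rw [nlen_tnode]) (by rw [nlen_tnode])) _
        · rw [if_neg hf]
          have ham : am 1 A out x 1 = none := by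
            refine am_odd_t_none hp (by rw [nlen_one]) ?_
            rw [hch, nstr_tnode]
            exact Bool.not_eq_true _ ▸ (by simpa using hf)
          apply result_of_iterate (N := 0) (by omega) heA
          rw [Function.iterate_zero, id]
          exact start_exit ham
      · -- D odd, D ≥ 3
        have hD3 : 3 ≤ D := by omega
        have e0 := flow (A := A) (B := B) (out := out) (x := x) (y := y) hs
          (D - 1) (by omega) (by omega)
        rw [if_neg (by omega)] at e0
        have hch : nch (tnode A B x y (D - 1)) (A x (nstr (tnode A B x y (D - 1)))) =
            tnode A B x y D := by
          rw [nstr_tnode, ← tnode_succ_even (D - 1) (by omega)]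
          congr 1
          omega
        by_cases hf : out x (transcript A B x y D) = true
        · rw [if_pos hf]
          have ham : am D A out x (tnode A B x y (D - 1)) =
              some (tnode A B x y D) := by
            rw [am_odd_t_pos hp (by rw [nlen_tnode]; omega)
              (by rw [hch, nstr_tnode]; exact hf), hch]
          apply result_of_iterate (N := D) (by omega) heB
          rw [show D - 1 - 1 = D - 2 by omega] at e0
          have e1 := iterate_chain _ (D - 2) e0
            (step_alice (tnode_two_le (D-1) (by omega)) (tnode_le hs (by omega))
              (tnode_two_le D (by omega)) (tnode_le hs (by omega)) ham
              (tpipe_lt hs (by omega) (by omega)) (tpipe_lt hs (by omega) (by omega)))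
          rw [show D - 2 + 1 = D - 1 by omega] at e1
          have e2 := iterate_chain _ (D - 1) e1
            (step_bob_exit (tnode_two_le D (by omega)) (tnode_le hs (by omega))
              (bm_none_odd (by rw [nlen_tnode]; omega) (by rw [nlen_tnode])) _)
          rw [show D - 1 + 1 = D by omega] at e2
          exact e2
        · rw [if_neg hf]
          have ham : am D A out x (tnode A B x y (D - 1)) = none := by
            refine am_odd_t_none hp (by rw [nlen_tnode]; omega) ?_
            rw [hch, nstr_tnode]
            simpa using hf
          apply result_of_iterate (N := D - 1) (by omega) heA
          rw [show D - 1 - 1 = D - 2 by omega] at e0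
          have e1 := iterate_chain _ (D - 2) e0
            (step_alice_exit (tnode_two_le (D-1) (by omega))
              (tnode_le hs (by omega)) ham _)
          rw [show D - 2 + 1 = D - 1 by omega] at e1
          exact e1
    · -- D even, D ≥ 2
      have hp2 : D % 2 = 0 := by omega
      have hD2 : 2 ≤ D := by omega
      have e0 := flow (A := A) (B := B) (out := out) (x := x) (y := y) hs
        D (by omega) (by omega)
      rw [if_neg (by omega)] at e0
      set m := tnode A B x y D with hm_def
      set t := tnode A B x y (D - 1) with ht_def
      have hm2 : 2 ≤ m := tnode_two_le D (by omega)
      have ht2 : 2 ≤ t := tnode_two_le (D - 1) (by omega)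
      have hms : m ≤ s + 1 := tnode_le hs (by omega)
      have hts : t ≤ s + 1 := tnode_le hs (by omega)
      have hlenm : nlen m = D := nlen_tnode D
      have hlent : nlen t = D - 1 := nlen_tnode (D - 1)
      have hpar : npar m = t := by
        have hh := npar_tnode (A := A) (B := B) (x := x) (y := y) (D - 1)
        rw [show D - 1 + 1 = D by omega] at hh
        rw [hm_def, ht_def]
        exact hh
      have hact : activeA A x t = true := by
        rw [ht_def, show D - 1 = (D - 2) + 1 by omega]
        exact activeA_tnode (D - 2) (by omega)
      have hactB : activeB B y m = true := by
        rw [hm_def, show D = (D - 1) + 1 by omega]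
        exact activeB_tnode (D - 1) (by omega)
      by_cases hf : out x (transcript A B x y D) = true
      · rw [if_pos hf]
        have houtm : out x (nstr m) = true := by rw [hm_def, nstr_tnode]; exact hf
        by_cases hboth : oo out x t true = true ∧ oo out x t false = true
        · -- both children answer 1: sibling edge at level D
          have ham : am D A out x m = some (nsib m) :=
            am_e_both hp2 hD0 hlenm (by rw [hpar]; exact hact)
              (by rw [hpar]; exact hboth.1) (by rw [hpar]; exact hboth.2)
          have hsib2 : 2 ≤ nsib m := nsib_pos m hm2
          have hsiblen : nlen (nsib m) = D := by rw [nlen_nsib m hm2, hlenm]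
          have hsibs : nsib m ≤ s + 1 := by
            rw [hs]; exact le_pow_of_nlen_le (by omega) (by omega)
          apply result_of_iterate (N := D + 1) (by omega) heB
          have hbmnone : bm D B y (nsib m) = none := by
            refine bm_none_inactive (by omega) ?_
            rw [activeB_nsib hm2, hactB]
            rfl
          have e1 := iterate_chain _ (D - 1) e0
            (step_alice hm2 hms hsib2 hsibs ham _ (by omega))
          rw [show D - 1 + 1 = D by omega] at e1
          exact iterate_chain _ D e1 (step_bob_exit hsib2 hsibs hbmnone _)
        · -- mixed: route through the dead sibling subtree
          have hmix : mixed out x t = true := by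
            have hself : oo out x t (nlast m) = true := by
              rw [← hpar, oo_self hm2]; exact houtm
            exact mixed_of hboth hself
          have ham : am D A out x m = some (nsib t) := by
            have := am_e_mix hp2 hD0 hlenm (by rw [hpar]; exact hact)
              (by rw [hpar]; exact hmix) houtm
            rw [this, hpar]
          have hst2 : 2 ≤ nsib t := nsib_pos t ht2
          have hstlen : nlen (nsib t) = D - 1 := by rw [nlen_nsib t ht2, hlent]
          have hsts : nsib t ≤ s + 1 := by
            rw [hs]; exact le_pow_of_nlen_le (by omega) (by omega)
          set w := nch (nsib t) (B y (nstr (nsib t))) with hw_def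
          have hw2 : 2 ≤ w := nch_pos _ _ (by omega)
          have hwlen : nlen w = D := by
            rw [hw_def, nlen_nch _ _ (by omega), hstlen]; omega
          have hws : w ≤ s + 1 := by
            rw [hs]; exact le_pow_of_nlen_le (by omega) (by omega)
          have hsw2 : 2 ≤ nsib w := nsib_pos w hw2
          have hswlen : nlen (nsib w) = D := by rw [nlen_nsib w hw2, hwlen]
          have hsws : nsib w ≤ s + 1 := by
            rw [hs]; exact le_pow_of_nlen_le (by omega) (by omega)
          apply result_of_iterate (N := D + 3) (by omega) heB
          have hamw : am D A out x w = some (nsib w) := by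
            refine am_e_dead hp2 hD0 hwlen ?_ ?_
            · rw [hw_def, npar_nch, activeA_nsib ht2, hact]; rfl
            · rw [hw_def, npar_nch, nsib_nsib t ht2]; exact hmix
          have hbmnone : bm D B y (nsib w) = none := by
            refine bm_none_inactive (by omega) ?_
            rw [activeB_nsib hw2, hw_def, activeB_nch _ (by omega)]
            simp
          have e1 := iterate_chain _ (D - 1) e0
            (step_alice hm2 hms hst2 hsts ham _ (by omega))
          rw [show D - 1 + 1 = D by omega] at e1
          have e2 := iterate_chain _ D e1
            (step_bob hst2 hsts hw2 hws (bm_down (by omega) (by omega)) _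
              (by omega))
          have e3 := iterate_chain _ (D + 1) e2
            (step_alice hw2 hws hsw2 hsws hamw _ (by omega))
          have e4 := iterate_chain _ (D + 1 + 1) e3
            (step_bob_exit hsw2 hsws hbmnone _)
          rw [show D + 1 + 1 + 1 = D + 3 by omega] at e4
          exact e4
      · rw [if_neg hf]
        have houtm : out x (nstr m) = false := by
          rw [hm_def, nstr_tnode]; simpa using hf
        have ham : am D A out x m = none :=
          am_e_top_none hp2 hD0 hm2 hlenm (by rw [hpar]; exact hact) houtm
        apply result_of_iterate (N := D) (by omega) heA
        have e1 := iterate_chain _ (D - 1) e0 (step_alice_exit hm2 hms ham _)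
        rw [show D - 1 + 1 = D by omega] at e1
        exact e1

end Main
/-- If `f` admits a deterministic alternating communication protocol of length
`D` (Alice sending first, one bit per round, and after `D` bits the pair
`(x, transcript)` determines `f x y`), then `GH f ≤ 2 ^ (D + 1) - 1`. -/
theorem gh_le_of_alternating_protocol (n D : ℕ)
    (f : (Fin n → Bool) → (Fin n → Bool) → Bool)
    (A B out : (Fin n → Bool) → List Bool → Bool)
    (h : ∀ x y, out x (transcript A B x y D) = f x y) :
    (∃ G : GHGame n (2 ^ (D + 1) - 1), G.Computes f) ∧
      GH f ≤ 2 ^ (D + 1) - 1 := by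
  have hpos : 0 < 2 ^ (D + 1) := pow_pos (by norm_num) _
  have hs : (2 ^ (D + 1) - 1) + 1 = 2 ^ (D + 1) := by omega
  let G : GHGame n (2 ^ (D + 1) - 1) :=
    { EA := fun x => mkEA D A out x
      EB := fun y => mkEB D B y
      matchA := fun x => mkEA_matching D A out x
      matchB := fun y => mkEB_matching D B y }
  have hG : G.Computes f := by
    intro x y
    show ghResult (mkEA D A out x) (mkEB D B y) = _
    rw [result_eq hs, h x y]
  exact ⟨⟨G, hG⟩, Nat.sInf_le ⟨G, hG⟩⟩
end

section
/- Let f : {0,1}^n × {0,1}^n → {0,1} be injective for Bob, i.e., for every pair y ≠ y' in {0,1}^n there exists x ∈ {0,1}^n with f(x,y) ≠ f(x,y'). Then the garden-hose complexity s = GH(f) satisfies s · log₂(s) ≥ n. Likewise, if f is injective for Alice (for every x ≠ x' there exists y with f(x,y) ≠ f(x',y)), then (s+1) · log₂(s+1) ≥ n. -/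
/-- `f` is injective for Bob: for every `y ≠ y'` there is `x` with
`f x y ≠ f x y'`. -/
def InjectiveForBob {n : ℕ}
    (f : (Fin n → Bool) → (Fin n → Bool) → Bool) : Prop :=
  ∀ y y' : Fin n → Bool, y ≠ y' → ∃ x, f x y ≠ f x y'

/-- `f` is injective for Alice: for every `x ≠ x'` there is `y` with
`f x y ≠ f x' y`. -/
def InjectiveForAlice {n : ℕ}
    (f : (Fin n → Bool) → (Fin n → Bool) → Bool) : Prop :=
  ∀ x x' : Fin n → Bool, x ≠ x' → ∃ y, f x y ≠ f x' y

/-! ### Auxiliary: a generic garden-hose game computing any `f` -/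

noncomputable def ghEnc (n : ℕ) : (Fin n → Bool) ≃ Fin (2 ^ n) :=
  Fintype.equivFinOfCardEq (by simp)

lemma two_pow_succ_even (n : ℕ) : 2 ^ (n + 1) % 2 = 0 := by
  simp [pow_succ, Nat.mul_mod]

/-- The pipe for input `x` and bit `b`. -/
noncomputable def ghPipe {n : ℕ} (x : Fin n → Bool) (b : Bool) : Fin (2 ^ (n + 1)) :=
  ⟨2 * (ghEnc n x : ℕ) + (if b then 1 else 0), by
    have := (ghEnc n x).isLt
    have : 2 ^ (n + 1) = 2 * 2 ^ n := by ring
    split <;> omega⟩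

/-- Alice's matching: connect the tap to `ghPipe x false`. -/
noncomputable def ghEA {n : ℕ} (x : Fin n → Bool)
    (k : Fin (2 ^ (n + 1) + 1)) : Option (Fin (2 ^ (n + 1) + 1)) :=
  if k = 0 then some (ghPipe x false).succ
  else if k = (ghPipe x false).succ then some 0
  else none

noncomputable def ghFlip {n : ℕ} (p : Fin (2 ^ (n + 1))) : Fin (2 ^ (n + 1)) :=
  ⟨if (p : ℕ) % 2 = 0 then (p : ℕ) + 1 else (p : ℕ) - 1, by
    have h1 := two_pow_succ_even n
    have h2 := p.isLt
    split <;> omega⟩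

noncomputable def ghDecode {n : ℕ} (p : Fin (2 ^ (n + 1))) : Fin n → Bool :=
  (ghEnc n).symm ⟨(p : ℕ) / 2, by
    have h2 := p.isLt
    have : 2 ^ (n + 1) = 2 * 2 ^ n := by ring
    omega⟩

/-- Bob's matching: pair `ghPipe x false` with `ghPipe x true` iff `f x y = false`. -/
noncomputable def ghEB {n : ℕ} (f : (Fin n → Bool) → (Fin n → Bool) → Bool)
    (y : Fin n → Bool) (p : Fin (2 ^ (n + 1))) : Option (Fin (2 ^ (n + 1))) :=
  if f (ghDecode p) y then none else some (ghFlip p)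

lemma ghFlip_ne {n : ℕ} (p : Fin (2 ^ (n + 1))) : p ≠ ghFlip p := by
  intro h
  have := congrArg Fin.val h
  simp only [ghFlip] at this
  split at this <;> omega

lemma ghFlip_flip {n : ℕ} (p : Fin (2 ^ (n + 1))) : ghFlip (ghFlip p) = p := by
  have h1 := two_pow_succ_even n
  have h2 := p.isLt
  apply Fin.ext
  simp only [ghFlip]
  split <;> split <;> omega

lemma ghDecode_flip {n : ℕ} (p : Fin (2 ^ (n + 1))) : ghDecode (ghFlip p) = ghDecode p := by
  unfold ghDecode
  congr 1
  apply Fin.ext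
  simp only [ghFlip]
  split <;> omega

lemma ghDecode_pipe {n : ℕ} (x : Fin n → Bool) (b : Bool) : ghDecode (ghPipe x b) = x := by
  unfold ghDecode
  have : (⟨((ghPipe x b : ℕ)) / 2, by
      have h2 := (ghPipe x b).isLt
      have : 2 ^ (n + 1) = 2 * 2 ^ n := by ring
      omega⟩ : Fin (2 ^ n)) = ghEnc n x := by
    apply Fin.ext
    simp only [ghPipe]
    split <;> omega
  rw [this, Equiv.symm_apply_apply]

lemma ghFlip_pipe_false {n : ℕ} (x : Fin n → Bool) :
    ghFlip (ghPipe x false) = ghPipe x true := by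
  apply Fin.ext
  simp only [ghFlip, ghPipe]
  simp [Nat.mul_mod_right]

noncomputable def ghGame {n : ℕ} (f : (Fin n → Bool) → (Fin n → Bool) → Bool) :
    GHGame n (2 ^ (n + 1)) where
  EA := ghEA
  EB := ghEB f
  matchA := by
    intro x i j hij
    unfold ghEA at hij ⊢
    have hne : (ghPipe x false).succ ≠ 0 := by
      intro h
      have := congrArg Fin.val h
      simp at this
    split at hij
    · rename_i h0
      subst h0
      obtain rfl : (ghPipe x false).succ = j := by
        simpa using hij
      refine ⟨(Ne.symm hne), ?_⟩
      rw [if_neg hne, if_pos rfl]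
    · split at hij
      · rename_i h0 h1
        subst h1
        obtain rfl : (0 : Fin (2 ^ (n + 1) + 1)) = j := by simpa using hij
        exact ⟨hne, by rw [if_pos rfl]⟩
      · simp at hij
  matchB := by
    intro y i j hij
    unfold ghEB at hij ⊢
    split at hij
    · simp at hij
    · rename_i hf
      obtain rfl : ghFlip i = j := by simpa using hij
      refine ⟨ghFlip_ne i, ?_⟩
      rw [ghDecode_flip, if_neg hf, ghFlip_flip]

lemma ghGame_computes {n : ℕ} (f : (Fin n → Bool) → (Fin n → Bool) → Bool) :
    (ghGame f).Computes f := by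
  intro x y
  have hstart : ghStart (ghEA x) = GHState.atBob (ghPipe x false) := by
    unfold ghStart ghEA
    rw [if_pos rfl]
    have h0 : ((ghPipe x false).succ : ℕ) ≠ 0 := by simp
    simp only [toPipe, dif_neg h0]
    congr 1
  have hstep1 : ghStep (ghEA x) (ghEB f y) (GHState.atBob (ghPipe x false)) =
      if f x y then GHState.exitB else GHState.atAlice (ghPipe x true) := by
    simp only [ghStep, ghEB, ghDecode_pipe]
    by_cases h : f x y
    · simp [h]
    · simp [h, ghFlip_pipe_false]
  have hstep2 : ghStep (ghEA x) (ghEB f y) (GHState.atAlice (ghPipe x true)) =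
      GHState.exitA := by
    simp only [ghStep, ghEA]
    have h0 : (ghPipe x true).succ ≠ (0 : Fin (2 ^ (n + 1) + 1)) := by
      intro h; have := congrArg Fin.val h; simp at this
    have h1 : (ghPipe x true).succ ≠ (ghPipe x false).succ := by
      intro h
      have := congrArg Fin.val h
      simp only [Fin.val_succ, ghPipe] at this
      simp at this
    rw [if_neg h0, if_neg h1]
  show ghResult (ghEA x) (ghEB f y) = _
  unfold ghResult
  rw [hstart]
  have h22 : 2 * 2 ^ (n + 1) + 2 = (2 * 2 ^ (n + 1)) + 2 := rfl
  rw [h22, Function.iterate_add_apply]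
  have : (ghStep (ghEA x) (ghEB f y))^[2] (GHState.atBob (ghPipe x false)) =
      if f x y then GHState.exitB else GHState.exitA := by
    show ghStep _ _ (ghStep _ _ _) = _
    rw [hstep1]
    by_cases h : f x y
    · simp [h, ghStep_exitB]
    · simp [h, hstep2]
  rw [this]
  by_cases h : f x y <;>
    simp [h, Function.iterate_fixed (ghStep_exitA _ _), Function.iterate_fixed (ghStep_exitB _ _)]

lemma gh_nonempty {n : ℕ} (f : (Fin n → Bool) → (Fin n → Bool) → Bool) :
    {s : ℕ | ∃ G : GHGame n s, G.Computes f}.Nonempty :=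
  ⟨2 ^ (n + 1), ghGame f, ghGame_computes f⟩

/-! ### Counting partial matchings -/

lemma card_no_fixed (s : ℕ) :
    Fintype.card {m : Fin s → Option (Fin s) // ∀ i, m i ≠ some i} = s ^ s := by
  rw [Fintype.card_congr (Equiv.subtypePiEquivPi (p := fun i o => o ≠ some i))]
  rw [Fintype.card_pi]
  have : ∀ i : Fin s, Fintype.card {o : Option (Fin s) // o ≠ some i} = s := by
    intro i
    rw [Fintype.card_subtype_compl, Fintype.card_subtype_eq, Fintype.card_option,
      Fintype.card_fin]
    omega
  simp [this]

lemma nat_le_mul_logb {n m : ℕ} (h : 2 ^ n ≤ m ^ m) :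
    (n : ℝ) ≤ (m : ℝ) * Real.logb 2 (m : ℝ) := by
  rcases le_or_gt m 1 with hm | hm
  · have hmm : m ^ m ≤ 1 := by interval_cases m <;> norm_num
    have hn : n = 0 := by
      by_contra hn
      have h2 : 1 < 2 ^ n := Nat.one_lt_two_pow_iff.mpr hn
      omega
    subst hn
    interval_cases m <;> simp
  · have h2 : (2 : ℝ) ^ n ≤ (m : ℝ) ^ m := by exact_mod_cast h
    have hlog := Real.logb_le_logb_of_le (b := 2) (by norm_num)
      (x := (2 : ℝ) ^ n) (by positivity) h2
    rw [Real.logb_pow, Real.logb_pow, Real.logb_self_eq_one (by norm_num)] at hlog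
    simpa using hlog

/-- If `f` is injective for Bob then `s = GH f` satisfies `s · log₂ s ≥ n`;
if `f` is injective for Alice then `(s+1) · log₂ (s+1) ≥ n`. -/
theorem gh_lower_bound_of_injective (n : ℕ)
    (f : (Fin n → Bool) → (Fin n → Bool) → Bool) :
    (InjectiveForBob f →
      (n : ℝ) ≤ (GH f : ℝ) * Real.logb 2 (GH f)) ∧
    (InjectiveForAlice f →
      (n : ℝ) ≤ ((GH f : ℝ) + 1) * Real.logb 2 ((GH f : ℝ) + 1)) := by
  obtain ⟨G, hG⟩ : ∃ G : GHGame n (GH f), G.Computes f := Nat.sInf_mem (gh_nonempty f)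
  have key : ∀ x y x' y', G.EA x = G.EA x' → G.EB y = G.EB y' → f x y = f x' y' := by
    intro x y x' y' hA hB
    have hrun : G.run x y = G.run x' y' := by
      unfold GHGame.run ghResult ghStart
      rw [hA, hB]
    rw [hG x y, hG x' y'] at hrun
    cases hxy : f x y <;> cases hxy' : f x' y' <;> simp_all
  constructor
  · intro hinj
    have hinjB : Function.Injective (fun y => (⟨G.EB y,
        fun i h => ((G.matchB y i i h).1 rfl).elim⟩ :
        {m : Fin (GH f) → Option (Fin (GH f)) // ∀ i, m i ≠ some i})) := by
      intro y y' h
      by_contra hne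
      obtain ⟨x, hx⟩ := hinj y y' hne
      exact hx (key x y x y' rfl (congrArg Subtype.val h))
    have hcard := Fintype.card_le_of_injective _ hinjB
    rw [card_no_fixed] at hcard
    have h2 : 2 ^ n ≤ GH f ^ GH f := by simpa using hcard
    exact nat_le_mul_logb h2
  · intro hinj
    have hinjA : Function.Injective (fun x => (⟨G.EA x,
        fun i h => ((G.matchA x i i h).1 rfl).elim⟩ :
        {m : Fin (GH f + 1) → Option (Fin (GH f + 1)) // ∀ i, m i ≠ some i})) := by
      intro x x' h
      by_contra hne
      obtain ⟨y, hy⟩ := hinj x x' hne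
      exact hy (key x y x' y (congrArg Subtype.val h) rfl)
    have hcard := Fintype.card_le_of_injective _ hinjA
    rw [card_no_fixed] at hcard
    have h2 : 2 ^ n ≤ (GH f + 1) ^ (GH f + 1) := by simpa using hcard
    have hres := nat_le_mul_logb h2
    push_cast at hres
    exact hres
end

section
/- Let EQ : {0,1}^n × {0,1}^n → {0,1} be the equality function, EQ(x,y) = 1 if and only if x = y. Then s = GH(EQ) satisfies s · log₂(s) ≥ n; in particular GH(EQ) ∈ Ω(n / log n). -/
/-- The equality function: `EQ x y = 1` iff `x = y`. -/
def EQfun (n : ℕ) (x y : Fin n → Bool) : Bool := decide (x = y)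


/-! ### Auxiliary lemmas -/


def flip1 (t : ℕ) : ℕ := if t % 2 = 0 then t + 1 else t - 1

lemma flip1_flip1 (t : ℕ) : flip1 (flip1 t) = t := by
  unfold flip1; split_ifs <;> omega

lemma flip1_ne (t : ℕ) : flip1 t ≠ t := by
  unfold flip1; split_ifs <;> omega

lemma flip1_lt {t N : ℕ} (h : t < N) (hN : N % 2 = 0) : flip1 t < N := by
  unfold flip1; split_ifs <;> omega

lemma two_pow_mod_two {n : ℕ} (hn : 1 ≤ n) : 2 ^ n % 2 = 0 := by
  obtain ⟨m, rfl⟩ : ∃ m, n = m + 1 := ⟨n - 1, by omega⟩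
  simp [pow_succ, Nat.mul_mod_left]

noncomputable def eqEquiv (n : ℕ) : (Fin n → Bool) ≃ Fin (2 ^ n) :=
  Fintype.equivFinOfCardEq (by simp)

noncomputable def eqEA (n : ℕ) (x : Fin n → Bool) :
    Fin (2 ^ n + 1 + 1) → Option (Fin (2 ^ n + 1 + 1)) :=
  fun k =>
    if (k : ℕ) = 0 then some ⟨(eqEquiv n x : ℕ) + 1, by have := (eqEquiv n x).isLt; omega⟩
    else if (k : ℕ) = (eqEquiv n x : ℕ) + 1 then some ⟨0, Nat.succ_pos _⟩
    else none

noncomputable def eqEB (n : ℕ) (hn : 1 ≤ n) (y : Fin n → Bool) :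
    Fin (2 ^ n + 1) → Option (Fin (2 ^ n + 1)) :=
  fun p =>
    if (p : ℕ) = (eqEquiv n y : ℕ) then none
    else if hN : (p : ℕ) = 2 ^ n then
      some ⟨flip1 (eqEquiv n y : ℕ), by
        have h1 := (eqEquiv n y).isLt
        have := flip1_lt h1 (two_pow_mod_two hn); omega⟩
    else if (p : ℕ) = flip1 (eqEquiv n y : ℕ) then some ⟨2 ^ n, Nat.lt_succ_self _⟩
    else some ⟨flip1 (p : ℕ), by
      have hp := p.isLt
      have h2 : (p : ℕ) < 2 ^ n := by omega
      have := flip1_lt h2 (two_pow_mod_two hn); omega⟩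

lemma eqEA_matching (n : ℕ) (x : Fin n → Bool) : IsPartialMatching (eqEA n x) := by
  intro i j hij
  unfold eqEA at hij ⊢
  split_ifs at hij with h1 h2
  · obtain rfl := Option.some_injective _ hij
    refine ⟨fun h => ?_, ?_⟩
    · have hv := congrArg Fin.val h; simp only [Fin.val_mk] at hv; omega
    · rw [if_neg (by simp), if_pos (by simp)]
      exact congrArg some (Fin.ext (by simp [h1]))
  · obtain rfl := Option.some_injective _ hij
    refine ⟨fun h => ?_, ?_⟩
    · have hv := congrArg Fin.val h; simp only [Fin.val_mk] at hv; omega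
    · rw [if_pos (by simp)]
      exact congrArg some (Fin.ext (by simp [h2]))

lemma eqEB_matching (n : ℕ) (hn : 1 ≤ n) (y : Fin n → Bool) :
    IsPartialMatching (eqEB n hn y) := by
  intro i j hij
  unfold eqEB at hij ⊢
  have htlt : (eqEquiv n y : ℕ) < 2 ^ n := (eqEquiv n y).isLt
  have heven := two_pow_mod_two hn
  have hft : flip1 (eqEquiv n y : ℕ) < 2 ^ n := flip1_lt htlt heven
  have hfnet : flip1 (eqEquiv n y : ℕ) ≠ (eqEquiv n y : ℕ) := flip1_ne _
  split_ifs at hij with h1 h2 h3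
  · -- i has value 2^n, j = ⟨flip1 t⟩
    obtain rfl := Option.some_injective _ hij
    refine ⟨fun h => ?_, ?_⟩
    · have hv := congrArg Fin.val h; simp only [Fin.val_mk] at hv; omega
    · rw [if_neg (by simp only [Fin.val_mk]; exact hfnet),
        dif_neg (by simp only [Fin.val_mk]; omega),
        if_pos (by simp only [Fin.val_mk])]
      exact congrArg some (Fin.ext (by simp [h2]))
  · -- i has value flip1 t, j = ⟨2^n⟩
    obtain rfl := Option.some_injective _ hij
    refine ⟨fun h => ?_, ?_⟩
    · have hv := congrArg Fin.val h; simp only [Fin.val_mk] at hv; omega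
    · rw [if_neg (by simp only [Fin.val_mk]; omega),
        dif_pos (by simp only [Fin.val_mk])]
      exact congrArg some (Fin.ext (by simp [h3]))
  · -- generic: j = ⟨flip1 i⟩
    obtain rfl := Option.some_injective _ hij
    have hilt : (i : ℕ) < 2 ^ n := by have := i.isLt; omega
    have hfi : flip1 (i : ℕ) < 2 ^ n := flip1_lt hilt heven
    have hfnei : flip1 (i : ℕ) ≠ (i : ℕ) := flip1_ne _
    refine ⟨fun h => ?_, ?_⟩
    · have hv := congrArg Fin.val h; simp only [Fin.val_mk] at hv; omega
    · have c1 : ¬ ((⟨flip1 (i : ℕ), by omega⟩ : Fin (2 ^ n + 1)) : ℕ) = (eqEquiv n y : ℕ) := by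
        simp only [Fin.val_mk]
        intro h
        apply h3
        rw [← h, flip1_flip1]
      have c3 : ¬ ((⟨flip1 (i : ℕ), by omega⟩ : Fin (2 ^ n + 1)) : ℕ)
          = flip1 (eqEquiv n y : ℕ) := by
        simp only [Fin.val_mk]
        intro h
        have h' := congrArg flip1 h
        rw [flip1_flip1, flip1_flip1] at h'
        exact h1 h'
      rw [if_neg c1, dif_neg (by simp only [Fin.val_mk]; omega), if_neg c3]
      exact congrArg some (Fin.ext (by simp only [Fin.val_mk, flip1_flip1]))

lemma ghStep_atBob_none {s : ℕ} (a : Fin (s + 1) → Option (Fin (s + 1)))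
    (b : Fin s → Option (Fin s)) (p : Fin s) (h : b p = none) :
    ghStep a b (GHState.atBob p) = GHState.exitB := by
  simp only [ghStep, h]

lemma ghStep_atBob_some {s : ℕ} (a : Fin (s + 1) → Option (Fin (s + 1)))
    (b : Fin s → Option (Fin s)) (p q : Fin s) (h : b p = some q) :
    ghStep a b (GHState.atBob p) = GHState.atAlice q := by
  simp only [ghStep, h]

lemma ghStep_atAlice_none {s : ℕ} (a : Fin (s + 1) → Option (Fin (s + 1)))
    (b : Fin s → Option (Fin s)) (p : Fin s) (h : a p.succ = none) :
    ghStep a b (GHState.atAlice p) = GHState.exitA := by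
  simp only [ghStep, h]

lemma ghStart_eqEA (n : ℕ) (x : Fin n → Bool) :
    ghStart (eqEA n x)
      = GHState.atBob ⟨(eqEquiv n x : ℕ), by have := (eqEquiv n x).isLt; omega⟩ := by
  have ha0 : eqEA n x 0
      = some ⟨(eqEquiv n x : ℕ) + 1, by have := (eqEquiv n x).isLt; omega⟩ := by
    unfold eqEA; rw [if_pos (by simp)]
  unfold ghStart
  rw [ha0]
  simp only [toPipe, Fin.val_mk, Nat.add_sub_cancel]
  rw [dif_neg (by omega)]

lemma eqEB_self (n : ℕ) (hn : 1 ≤ n) (y : Fin n → Bool) (p : Fin (2 ^ n + 1))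
    (hp : (p : ℕ) = (eqEquiv n y : ℕ)) : eqEB n hn y p = none := by
  unfold eqEB; rw [if_pos hp]

lemma eqEB_ne (n : ℕ) (hn : 1 ≤ n) (y : Fin n → Bool) (p : Fin (2 ^ n + 1))
    (hp : ¬ (p : ℕ) = (eqEquiv n y : ℕ)) :
    ∃ q : Fin (2 ^ n + 1), eqEB n hn y p = some q ∧ (q : ℕ) ≠ (p : ℕ) := by
  have hft : flip1 (eqEquiv n y : ℕ) < 2 ^ n :=
    flip1_lt (eqEquiv n y).isLt (two_pow_mod_two hn)
  unfold eqEB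
  rw [if_neg hp]
  split_ifs with h2 h3
  · exact ⟨_, rfl, by simp only [Fin.val_mk]; omega⟩
  · exact ⟨_, rfl, by simp only [Fin.val_mk]; omega⟩
  · exact ⟨_, rfl, by simp only [Fin.val_mk]; exact flip1_ne _⟩

lemma eqEA_none (n : ℕ) (x : Fin n → Bool) (k : Fin (2 ^ n + 1 + 1))
    (h0 : ¬ (k : ℕ) = 0) (hx : ¬ (k : ℕ) = (eqEquiv n x : ℕ) + 1) : eqEA n x k = none := by
  unfold eqEA; rw [if_neg h0, if_neg hx]

noncomputable def eqGame (n : ℕ) (hn : 1 ≤ n) : GHGame n (2 ^ n + 1) where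
  EA := eqEA n
  EB := eqEB n hn
  matchA := eqEA_matching n
  matchB := eqEB_matching n hn

lemma eqGame_computes (n : ℕ) (hn : 1 ≤ n) : (eqGame n hn).Computes (EQfun n) := by
  intro x y
  unfold GHGame.run ghResult
  show (ghStep (eqEA n x) (eqEB n hn y))^[2 * (2 ^ n + 1) + 2] (ghStart (eqEA n x)) = _
  rw [ghStart_eqEA n x]
  by_cases hxy : x = y
  · subst hxy
    have hb : eqEB n hn x ⟨(eqEquiv n x : ℕ), by have := (eqEquiv n x).isLt; omega⟩ = none :=
      eqEB_self n hn x _ rfl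
    rw [show 2 * (2 ^ n + 1) + 2 = (2 * (2 ^ n + 1) + 1) + 1 from rfl,
      Function.iterate_succ_apply, ghStep_atBob_none _ _ _ hb,
      Function.iterate_fixed rfl]
    simp [EQfun]
  · have hne : ¬ ((⟨(eqEquiv n x : ℕ), by have := (eqEquiv n x).isLt; omega⟩ :
        Fin (2 ^ n + 1)) : ℕ) = (eqEquiv n y : ℕ) := by
      simp only [Fin.val_mk]
      intro h
      exact hxy ((eqEquiv n).injective (Fin.ext h))
    obtain ⟨q, hq, hqne⟩ := eqEB_ne n hn y _ hne
    have ha : eqEA n x q.succ = none := by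
      apply eqEA_none
      · simp [Fin.val_succ]
      · simp only [Fin.val_succ, Fin.val_mk] at hqne ⊢
        omega
    rw [show 2 * (2 ^ n + 1) + 2 = (2 * (2 ^ n + 1) + 1) + 1 from rfl,
      Function.iterate_succ_apply, ghStep_atBob_some _ _ _ _ hq,
      Function.iterate_succ_apply, ghStep_atAlice_none _ _ _ ha,
      Function.iterate_fixed rfl]
    simp [EQfun, hxy]

lemma gh_key (n : ℕ) : (n : ℝ) ≤ (GH (EQfun n) : ℝ) * Real.logb 2 (GH (EQfun n)) := by
  rcases Nat.eq_zero_or_pos n with rfl | hn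
  · rcases Nat.eq_zero_or_pos (GH (EQfun 0)) with h | h
    · simp [h]
    · exact_mod_cast mul_nonneg (Nat.cast_nonneg _)
        (Real.logb_nonneg one_lt_two (by exact_mod_cast h))
  · set s := GH (EQfun n) with hsdef
    have hmem : s ∈ {s : ℕ | ∃ G : GHGame n s, G.Computes (EQfun n)} :=
      Nat.sInf_mem ⟨2 ^ n + 1, eqGame n hn, eqGame_computes n hn⟩
    obtain ⟨G, hG⟩ := hmem
    have hinj : Function.Injective G.EB := by
      intro y y' hEB
      by_contra hne
      have h1 := hG y y'
      have h2 := hG y y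
      rw [if_neg (by simp [EQfun, hne] : ¬ (EQfun n y y' = true))] at h1
      rw [if_pos (by simp [EQfun] : EQfun n y y = true)] at h2
      unfold GHGame.run at h1 h2
      rw [← hEB, h2] at h1
      exact GHState.noConfusion rfl (heq_of_eq h1)
    have hcount : 2 ^ n ≤ s ^ s := by
      have hF : Function.Injective
          (fun y : Fin n → Bool => (fun i : Fin s =>
            (⟨G.EB y i, fun h => ((G.matchB y) i i h).1 rfl⟩ :
              {o : Option (Fin s) // o ≠ some i}))) := by
        intro y y' h
        apply hinj
        funext i
        exact congrArg Subtype.val (congrFun h i)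
      calc 2 ^ n = Fintype.card (Fin n → Bool) := by simp
        _ ≤ Fintype.card (∀ i : Fin s, {o : Option (Fin s) // o ≠ some i}) :=
            Fintype.card_le_of_injective _ hF
        _ = ∏ i : Fin s, Fintype.card {o : Option (Fin s) // o ≠ some i} := by
            rw [Fintype.card_pi]
        _ = ∏ _i : Fin s, s := by
            refine Finset.prod_congr rfl fun i _ => ?_
            have h1 : Fintype.card {o : Option (Fin s) // ¬ o = some i}
                = Fintype.card (Option (Fin s))
                  - Fintype.card {o : Option (Fin s) // o = some i} :=
              Fintype.card_subtype_compl _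
            rw [Fintype.card_subtype_eq, Fintype.card_option, Fintype.card_fin] at h1
            simpa using h1
        _ = s ^ s := by simp
    rcases Nat.eq_zero_or_pos s with hs0 | hs1
    · exfalso
      rw [hs0] at hcount
      simp at hcount
      have : 1 < 2 ^ n := Nat.one_lt_two_pow_iff.mpr (by omega)
      omega
    · have hr : (2 : ℝ) ^ n ≤ (s : ℝ) ^ s := by exact_mod_cast hcount
      have hlog := Real.logb_le_logb_of_le one_lt_two (by positivity) hr
      rw [Real.logb_pow, Real.logb_pow, Real.logb_self_eq_one one_lt_two] at hlog
      have hs0' : (0:ℝ) ≤ Real.logb 2 s :=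
        Real.logb_nonneg one_lt_two (by exact_mod_cast hs1)
      nlinarith [hlog]

/-- `s = GH(EQ)` satisfies `s · log₂ s ≥ n`; in particular
`GH(EQ) ∈ Ω(n / log n)`. -/
theorem gh_eq_lower_bound (n : ℕ) :
    (n : ℝ) ≤ (GH (EQfun n) : ℝ) * Real.logb 2 (GH (EQfun n)) ∧
    ∃ C : ℝ, 0 < C ∧ ∀ m : ℕ, 2 ≤ m →
      C * ((m : ℝ) / Real.logb 2 m) ≤ (GH (EQfun m) : ℝ) := by
  refine ⟨gh_key n, 1, one_pos, fun m hm => ?_⟩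
  rw [one_mul]
  have hkey := gh_key m
  set s := GH (EQfun m) with hs
  have hm2 : (2 : ℝ) ≤ (m : ℝ) := by exact_mod_cast hm
  have hlogm : 1 ≤ Real.logb 2 (m : ℝ) := by
    have h22 : Real.logb 2 2 = 1 := Real.logb_self_eq_one one_lt_two
    rw [← h22]
    exact Real.logb_le_logb_of_le one_lt_two two_pos hm2
  have hlogm0 : (0 : ℝ) < Real.logb 2 (m : ℝ) := lt_of_lt_of_le one_pos hlogm
  by_cases hcase : (s : ℝ) ≤ (m : ℝ)
  · rw [div_le_iff₀ hlogm0]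
    calc (m : ℝ) ≤ s * Real.logb 2 s := hkey
      _ ≤ s * Real.logb 2 m := by
        apply mul_le_mul_of_nonneg_left ?_ (Nat.cast_nonneg s)
        rcases Nat.eq_zero_or_pos s with h0 | h1
        · rw [h0]; simp only [Nat.cast_zero, Real.logb_zero]
          exact le_of_lt hlogm0
        · exact Real.logb_le_logb_of_le one_lt_two (by exact_mod_cast h1) hcase
  · push_neg at hcase
    calc (m : ℝ) / Real.logb 2 (m : ℝ) ≤ (m : ℝ) := div_le_self (by positivity) hlogm
      _ ≤ (s : ℝ) := le_of_lt hcase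
end

section
/- Let IP : {0,1}^n × {0,1}^n → {0,1} be the bitwise inner-product function, IP(x,y) = Σ_i x_i y_i (mod 2). Then s = GH(IP) satisfies s · log₂(s) ≥ n; in particular GH(IP) ∈ Ω(n / log n). -/
/-- The bitwise inner-product function: `IP x y = Σ_i x_i y_i (mod 2)`. -/
def IPfun (n : ℕ) (x y : Fin n → Bool) : Bool :=
  decide ((Finset.univ.filter fun i => x i = true ∧ y i = true).card % 2 = 1)

namespace GHAux

theorem exitB_ne_exitA {s : ℕ} : (GHState.exitB : GHState s) ≠ GHState.exitA := fun h => nomatch h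

theorem ghStart_none {s : ℕ} {a : Fin (s+1) → Option (Fin (s+1))} (h : a 0 = none) :
    ghStart a = GHState.exitA := by
  unfold ghStart; rw [h]

theorem ghStart_some {s : ℕ} {a : Fin (s+1) → Option (Fin (s+1))} {k : Fin (s+1)}
    (h : a 0 = some k) :
    ghStart a = (match toPipe k with | none => GHState.exitA | some p => GHState.atBob p) := by
  unfold ghStart; rw [h]

theorem step_atBob {s : ℕ} (a : Fin (s+1) → Option (Fin (s+1))) (b : Fin s → Option (Fin s))
    (i : Fin s) : ghStep a b (GHState.atBob i) =
      (match b i with | none => GHState.exitB | some j => GHState.atAlice j) := rfl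

theorem step_atAlice {s : ℕ} (a : Fin (s+1) → Option (Fin (s+1))) (b : Fin s → Option (Fin s))
    (i : Fin s) : ghStep a b (GHState.atAlice i) =
      (match a i.succ with
       | none => GHState.exitA
       | some k => (match toPipe k with | none => GHState.exitA | some p => GHState.atBob p)) := rfl

/-! ### Upper bound: a universal game of size `2 * 2^n` -/

noncomputable def bEquiv (n : ℕ) : (Fin n → Bool) ≃ Fin (2 ^ n) :=
  Fintype.equivFinOfCardEq (by simp)

theorem two_pow_pos (n : ℕ) : 0 < 2 ^ n := Nat.pow_pos (by norm_num)

/-- Decode a pipe number (mod `2^n`) into an input string. -/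
noncomputable def udec (n : ℕ) (k : ℕ) : Fin n → Bool :=
  (bEquiv n).symm ⟨k % 2 ^ n, Nat.mod_lt _ (two_pow_pos n)⟩

theorem udec_px (n : ℕ) (x : Fin n → Bool) : udec n (bEquiv n x).val = x := by
  unfold udec
  rw [show (⟨(bEquiv n x).val % 2 ^ n, Nat.mod_lt _ (two_pow_pos n)⟩ : Fin (2 ^ n)) = bEquiv n x
      from Fin.ext (Nat.mod_eq_of_lt (bEquiv n x).isLt), Equiv.symm_apply_apply]

noncomputable def uEA (n : ℕ) (x : Fin n → Bool) :
    Fin (2 * 2 ^ n + 1) → Option (Fin (2 * 2 ^ n + 1)) := fun v =>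
  if v.val = 0 then some ⟨(bEquiv n x).val + 1, by have := (bEquiv n x).isLt; omega⟩
  else if v.val = (bEquiv n x).val + 1 then some ⟨0, by omega⟩
  else none

noncomputable def uEB (n : ℕ) (f : (Fin n → Bool) → (Fin n → Bool) → Bool) (y : Fin n → Bool) :
    Fin (2 * 2 ^ n) → Option (Fin (2 * 2 ^ n)) := fun p =>
  if h : p.val < 2 ^ n then
    (if f (udec n p.val) y then none
     else some ⟨p.val + 2 ^ n, by have ha := p.isLt; omega⟩)
  else
    (if f (udec n (p.val - 2 ^ n)) y then none
     else some ⟨p.val - 2 ^ n, by have ha := p.isLt; have hb := two_pow_pos n; omega⟩)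

theorem uEA_match (n : ℕ) (x : Fin n → Bool) : IsPartialMatching (uEA n x) := by
  intro i j hij
  unfold uEA at hij ⊢
  by_cases h0 : (i : ℕ) = 0
  · rw [if_pos h0] at hij
    obtain rfl := (Option.some.inj hij).symm
    constructor
    · intro he
      rw [he] at h0
      exact absurd h0 (by simp)
    · rw [if_neg (by simp), if_pos (by simp)]
      exact congrArg some (Fin.ext h0.symm)
  · rw [if_neg h0] at hij
    by_cases h1 : (i : ℕ) = (bEquiv n x).val + 1
    · rw [if_pos h1] at hij
      obtain rfl := (Option.some.inj hij).symm
      constructor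
      · intro he
        rw [he] at h0
        exact absurd h0 (by simp)
      · rw [if_pos (by simp)]
        exact congrArg some (Fin.ext h1.symm)
    · rw [if_neg h1] at hij
      exact absurd hij (by simp)

theorem uEB_match (n : ℕ) (f : (Fin n → Bool) → (Fin n → Bool) → Bool) (y : Fin n → Bool) :
    IsPartialMatching (uEB n f y) := by
  have h2 := two_pow_pos n
  intro i j hij
  have hiv := i.isLt
  unfold uEB at hij ⊢
  by_cases hi : (i : ℕ) < 2 ^ n
  · rw [dif_pos hi] at hij
    by_cases hf : f (udec n i.val) y
    · rw [if_pos hf] at hij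
      exact absurd hij (by simp)
    · rw [if_neg hf] at hij
      obtain rfl := (Option.some.inj hij).symm
      refine ⟨fun he => absurd (congrArg Fin.val he) (by show ¬ ((i:ℕ) = (i:ℕ) + 2 ^ n); omega), ?_⟩
      rw [dif_neg (show ¬ ((i:ℕ) + 2 ^ n < 2 ^ n) by omega)]
      have harg : f (udec n ((i:ℕ) + 2 ^ n - 2 ^ n)) y = f (udec n (i:ℕ)) y := by
        rw [show (i:ℕ) + 2 ^ n - 2 ^ n = (i:ℕ) by omega]
      rw [show (f (udec n ((⟨(i:ℕ) + 2 ^ n, by omega⟩ : Fin (2 * 2 ^ n)).val - 2 ^ n)) y)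
          = f (udec n (i:ℕ)) y from harg]
      rw [if_neg hf]
      exact congrArg some (Fin.ext (show (i:ℕ) + 2 ^ n - 2 ^ n = (i:ℕ) by omega))
  · rw [dif_neg hi] at hij
    by_cases hf : f (udec n (i.val - 2 ^ n)) y
    · rw [if_pos hf] at hij
      exact absurd hij (by simp)
    · rw [if_neg hf] at hij
      obtain rfl := (Option.some.inj hij).symm
      refine ⟨fun he => absurd (congrArg Fin.val he) (by show ¬ ((i:ℕ) = (i:ℕ) - 2 ^ n); omega), ?_⟩
      rw [dif_pos (show ((⟨(i:ℕ) - 2 ^ n, by omega⟩ : Fin (2 * 2 ^ n)) : ℕ) < 2 ^ n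
        from show (i:ℕ) - 2 ^ n < 2 ^ n by omega)]
      rw [if_neg hf]
      exact congrArg some (Fin.ext (show (i:ℕ) - 2 ^ n + 2 ^ n = (i:ℕ) by omega))

noncomputable def univGame (n : ℕ) (f : (Fin n → Bool) → (Fin n → Bool) → Bool) :
    GHGame n (2 * 2 ^ n) where
  EA := uEA n
  EB := uEB n f
  matchA := uEA_match n
  matchB := uEB_match n f

theorem univGame_computes (n : ℕ) (f : (Fin n → Bool) → (Fin n → Bool) → Bool) :
    (univGame n f).Computes f := by
  have h2 := two_pow_pos n
  intro x y
  have hpxlt := (bEquiv n x).isLt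
  set px := (bEquiv n x).val with hpx
  have hA0 : uEA n x 0 = some ⟨px + 1, by omega⟩ := by
    unfold uEA
    rw [if_pos (show ((0 : Fin (2 * 2 ^ n + 1)) : ℕ) = 0 by simp)]
  have hT : toPipe (⟨px + 1, by omega⟩ : Fin (2 * 2 ^ n + 1)) = some ⟨px, by omega⟩ := by
    unfold toPipe
    rw [dif_neg (show ¬ (px + 1 = 0) by omega)]
    exact congrArg some (Fin.ext (show px + 1 - 1 = px from rfl))
  have hstart : ghStart (uEA n x) = GHState.atBob ⟨px, by omega⟩ := by
    rw [ghStart_some hA0, hT]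
  have hB : uEB n f y ⟨px, by omega⟩ =
      if f x y then none else some ⟨px + 2 ^ n, by omega⟩ := by
    unfold uEB
    rw [dif_pos (show px < 2 ^ n from hpxlt)]
    rw [show udec n ((⟨px, by omega⟩ : Fin (2 * 2 ^ n)) : ℕ) = x from udec_px n x]
  have hstep1 : ghStep (uEA n x) (uEB n f y) (GHState.atBob ⟨px, by omega⟩) =
      (if f x y then GHState.exitB else GHState.atAlice ⟨px + 2 ^ n, by omega⟩) := by
    rw [step_atBob, hB]
    cases f x y <;> rfl
  have hnone : uEA n x (Fin.succ ⟨px + 2 ^ n, by omega⟩) = none := by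
    unfold uEA
    rw [if_neg (show ¬ ((Fin.succ (⟨px + 2 ^ n, by omega⟩ : Fin (2 * 2 ^ n))) : ℕ) = 0
        from show ¬ (px + 2 ^ n + 1 = 0) by omega)]
    rw [if_neg (show ¬ ((Fin.succ (⟨px + 2 ^ n, by omega⟩ : Fin (2 * 2 ^ n))) : ℕ) = px + 1
        from show ¬ (px + 2 ^ n + 1 = px + 1) by omega)]
  have hstep2 : ghStep (uEA n x) (uEB n f y) (GHState.atAlice ⟨px + 2 ^ n, by omega⟩) =
      GHState.exitA := by
    rw [step_atAlice, hnone]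
  show ghResult (uEA n x) (uEB n f y) = _
  unfold ghResult
  rw [hstart]
  rw [show 2 * (2 * 2 ^ n) + 2 = (2 * (2 * 2 ^ n) + 1) + 1 from rfl,
    Function.iterate_succ_apply, hstep1]
  cases hf : f x y
  · simp only [Bool.false_eq_true, if_false]
    rw [show 2 * (2 * 2 ^ n) + 1 = (2 * (2 * 2 ^ n)) + 1 from rfl,
      Function.iterate_succ_apply, hstep2]
    exact Function.iterate_fixed rfl _
  · simp only [if_true]
    exact Function.iterate_fixed rfl _

theorem gh_set_nonempty (n : ℕ) (f : (Fin n → Bool) → (Fin n → Bool) → Bool) :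
    {s : ℕ | ∃ G : GHGame n s, G.Computes f}.Nonempty :=
  ⟨2 * 2 ^ n, univGame n f, univGame_computes n f⟩

/-! ### Reading `y` off `IP` -/

theorem IP_delta (n : ℕ) (i : Fin n) (y : Fin n → Bool) :
    IPfun n (fun j => decide (j = i)) y = y i := by
  unfold IPfun
  have hset : (Finset.univ.filter fun j => (decide (j = i)) = true ∧ y j = true) =
      if y i then {i} else ∅ := by
    split_ifs with h
    · ext j
      simp only [Finset.mem_filter, Finset.mem_univ, true_and, decide_eq_true_eq,
        Finset.mem_singleton]
      exact ⟨fun hj => hj.1, fun hj => ⟨hj, hj ▸ h⟩⟩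
    · ext j
      simp only [Finset.mem_filter, Finset.mem_univ, true_and, decide_eq_true_eq,
        Finset.notMem_empty, iff_false, not_and]
      rintro rfl
      exact fun hy => h hy
  rw [hset]
  cases hy : y i <;> simp [hy]

/-! ### Lower bound: injectivity of Bob's strategy -/

theorem EB_inj {n s : ℕ} (G : GHGame n s) (hG : G.Computes (IPfun n)) :
    Function.Injective G.EB := by
  intro y y' h
  have hIP : ∀ x, IPfun n x y = IPfun n x y' := by
    intro x
    have hr : G.run x y = G.run x y' := by
      show ghResult (G.EA x) (G.EB y) = ghResult (G.EA x) (G.EB y')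
      rw [h]
    rw [hG x y, hG x y'] at hr
    cases h1 : IPfun n x y <;> cases h2 : IPfun n x y' <;> rw [h1, h2] at hr <;>
      first
        | rfl
        | (exfalso; simp only [if_true, if_false, Bool.false_eq_true] at hr;
           first
             | exact exitB_ne_exitA hr.symm
             | exact exitB_ne_exitA hr)
  funext i
  have := hIP (fun j => decide (j = i))
  rwa [IP_delta, IP_delta] at this

def msigma {s : ℕ} (m : Fin s → Option (Fin s)) : Fin s → Fin s := fun i => (m i).getD i

theorem msigma_invol {s : ℕ} {m : Fin s → Option (Fin s)} (hm : IsPartialMatching m) (i : Fin s) :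
    msigma m (msigma m i) = i := by
  cases hmi : m i with
  | none => simp [msigma, hmi]
  | some j =>
    obtain ⟨hne, hji⟩ := hm i j hmi
    simp [msigma, hmi, hji]

theorem msigma_inj {s : ℕ} {m : Fin s → Option (Fin s)} (hm : IsPartialMatching m) :
    Function.Injective (msigma m) :=
  Function.LeftInverse.injective (g := msigma m) (msigma_invol hm)

theorem msigma_eq {s : ℕ} {m m' : Fin s → Option (Fin s)} (hm : IsPartialMatching m)
    (hm' : IsPartialMatching m') (h : msigma m = msigma m') : m = m' := by
  funext i
  have hi := congrFun h i
  cases hmi : m i with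
  | none =>
    cases hmi' : m' i with
    | none => rfl
    | some j =>
      exfalso
      simp only [msigma, hmi, hmi', Option.getD_none, Option.getD_some] at hi
      exact (hm' i j hmi').1 hi
  | some j =>
    cases hmi' : m' i with
    | none =>
      exfalso
      simp only [msigma, hmi, hmi', Option.getD_none, Option.getD_some] at hi
      exact (hm i j hmi).1 hi.symm
    | some j' =>
      simp only [msigma, hmi, hmi', Option.getD_some] at hi
      rw [hi]

theorem restrict_eq {s' : ℕ} (σ τ : Fin (s' + 1) → Fin (s' + 1))
    (hσ : Function.Injective σ) (hτ : Function.Injective τ)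
    (h : ∀ i : Fin s', σ i.castSucc = τ i.castSucc) : σ = τ := by
  funext j
  induction j using Fin.lastCases with
  | cast i => exact h i
  | last =>
    obtain ⟨k, hk⟩ := Finite.surjective_of_injective hτ (σ (Fin.last s'))
    induction k using Fin.lastCases with
    | last => exact hk.symm
    | cast i =>
      exfalso
      rw [← h i] at hk
      exact absurd (hσ hk) (ne_of_lt (Fin.castSucc_lt_last i))

theorem card_bound {n s' : ℕ} (G : GHGame n (s' + 1)) (hG : G.Computes (IPfun n)) :
    2 ^ n ≤ (s' + 1) ^ s' := by
  have key : Function.Injective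
      (fun y : Fin n → Bool => fun i : Fin s' => msigma (G.EB y) i.castSucc) := by
    intro y y' h
    have hσ : msigma (G.EB y) = msigma (G.EB y') :=
      restrict_eq _ _ (msigma_inj (G.matchB y)) (msigma_inj (G.matchB y'))
        (fun i => congrFun h i)
    exact EB_inj G hG (msigma_eq (G.matchB y) (G.matchB y') hσ)
  calc 2 ^ n = Fintype.card (Fin n → Bool) := by simp
    _ ≤ Fintype.card (Fin s' → Fin (s' + 1)) := Fintype.card_le_of_injective _ key
    _ = (s' + 1) ^ s' := by simp

theorem run_zero {n : ℕ} (G : GHGame n 0) (x y : Fin n → Bool) :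
    G.run x y = GHState.exitA := by
  have hstart : ghStart (G.EA x) = GHState.exitA := by
    cases h : G.EA x 0 with
    | none => exact ghStart_none h
    | some k =>
      rw [ghStart_some h]
      have hk : toPipe k = none := by
        unfold toPipe
        rw [dif_pos (by omega)]
      rw [hk]
  show ghResult (G.EA x) (G.EB y) = _
  unfold ghResult
  rw [hstart]
  exact Function.iterate_fixed rfl _

/-- Main quantitative bound, for every `n`. -/
theorem main_bound (n : ℕ) :
    (n : ℝ) ≤ (GH (IPfun n) : ℝ) * Real.logb 2 (GH (IPfun n)) := by
  have hmem : GH (IPfun n) ∈ {s : ℕ | ∃ G : GHGame n s, G.Computes (IPfun n)} :=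
    Nat.sInf_mem (gh_set_nonempty n (IPfun n))
  rcases hs : GH (IPfun n) with _ | s'
  · rw [hs] at hmem
    obtain ⟨G, hG⟩ := hmem
    rcases Nat.eq_zero_or_pos n with hn | hn
    · simp [hn]
    · exfalso
      set i0 : Fin n := ⟨0, hn⟩
      have h1 := hG (fun j => decide (j = i0)) (fun j => decide (j = i0))
      rw [run_zero, IP_delta] at h1
      simp only [decide_eq_true_eq, if_pos rfl, if_true] at h1
      exact exitB_ne_exitA h1.symm
  · rw [hs] at hmem
    obtain ⟨G, hG⟩ := hmem
    have hcard : 2 ^ n ≤ (s' + 1) ^ s' := card_bound G hG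
    have hcast : ((2 : ℝ)) ^ n ≤ ((s' : ℝ) + 1) ^ s' := by exact_mod_cast hcard
    have hs1 : (1 : ℝ) ≤ (s' : ℝ) + 1 := by have := Nat.cast_nonneg (α := ℝ) s'; linarith
    have h1 : (n : ℝ) = Real.logb 2 ((2 : ℝ) ^ n) := by
      rw [Real.logb_pow, Real.logb_self_eq_one (by norm_num)]
      ring
    have h2 : Real.logb 2 ((2 : ℝ) ^ n) ≤ Real.logb 2 (((s' : ℝ) + 1) ^ s') :=
      (Real.logb_le_logb (by norm_num) (by positivity) (by positivity)).mpr hcast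
    have h3 : Real.logb 2 (((s' : ℝ) + 1) ^ s') = (s' : ℝ) * Real.logb 2 ((s' : ℝ) + 1) :=
      Real.logb_pow _ _ _
    have hlog : 0 ≤ Real.logb 2 ((s' : ℝ) + 1) := Real.logb_nonneg (by norm_num) hs1
    have h4 : (s' : ℝ) * Real.logb 2 ((s' : ℝ) + 1) ≤
        ((s' : ℝ) + 1) * Real.logb 2 ((s' : ℝ) + 1) := by nlinarith
    have hfin : (n : ℝ) ≤ ((s' : ℝ) + 1) * Real.logb 2 ((s' : ℝ) + 1) := by
      rw [h1]
      calc _ ≤ _ := h2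
        _ = _ := h3
        _ ≤ _ := h4
    convert hfin using 2 <;> push_cast <;> ring

end GHAux

/-- `s = GH(IP)` satisfies `s · log₂ s ≥ n`; in particular
`GH(IP) ∈ Ω(n / log n)`. -/
theorem gh_ip_lower_bound (n : ℕ) :
    (n : ℝ) ≤ (GH (IPfun n) : ℝ) * Real.logb 2 (GH (IPfun n)) ∧
    ∃ C : ℝ, 0 < C ∧ ∀ m : ℕ, 2 ≤ m →
      C * ((m : ℝ) / Real.logb 2 m) ≤ (GH (IPfun m) : ℝ) := by
  refine ⟨GHAux.main_bound n, 1, one_pos, fun m hm => ?_⟩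
  have hmain := GHAux.main_bound m
  have hm2 : (2 : ℝ) ≤ (m : ℝ) := by exact_mod_cast hm
  have hlogm : 0 < Real.logb 2 (m : ℝ) := Real.logb_pos (by norm_num) (by linarith)
  rw [one_mul, div_le_iff₀ hlogm]
  rcases le_or_gt (GH (IPfun m)) m with h | h
  · have hs0 : GH (IPfun m) ≠ 0 := by
      intro h0
      rw [h0] at hmain
      simp only [Nat.cast_zero, Real.logb_zero, mul_zero] at hmain
      linarith
    have hcast : ((GH (IPfun m) : ℝ)) ≤ (m : ℝ) := Nat.cast_le.mpr h
    have hs1 : (1 : ℝ) ≤ (GH (IPfun m) : ℝ) :=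
      Nat.one_le_cast.mpr (Nat.one_le_iff_ne_zero.mpr hs0)
    have hlog : Real.logb 2 (GH (IPfun m) : ℝ) ≤ Real.logb 2 (m : ℝ) :=
      (Real.logb_le_logb (by norm_num) (by linarith) (by linarith)).mpr hcast
    calc (m : ℝ) ≤ (GH (IPfun m) : ℝ) * Real.logb 2 (GH (IPfun m) : ℝ) := hmain
      _ ≤ (GH (IPfun m) : ℝ) * Real.logb 2 (m : ℝ) :=
          mul_le_mul_of_nonneg_left hlog (by linarith)
  · have hms : (m : ℝ) ≤ (GH (IPfun m) : ℝ) := by exact_mod_cast h.le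
    have h1log : (1 : ℝ) ≤ Real.logb 2 (m : ℝ) := by
      rw [show (1 : ℝ) = Real.logb 2 2 from (Real.logb_self_eq_one (by norm_num)).symm]
      exact (Real.logb_le_logb (by norm_num) (by norm_num) (by linarith)).mpr hm2
    nlinarith
end

section
/- The equality function EQ : {0,1}^n × {0,1}^n → {0,1}, EQ(x,y) = 1 if and only if x = y, can be computed in the garden-hose model with 3n + 1 pipes: GH(EQ) ≤ 3n + 1. -/
namespace Scratch


/-- Alice's matching (on ℕ vertices; vertex 0 is the tap, vertex p+1 is pipe p). -/
def naF (n : ℕ) (c : ℕ → ℕ) : ℕ → Option ℕ := fun v =>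
  if v = 0 then some (c 0 + 1)
  else if v = c 0 + 1 then some 0
  else if 2*n + 1 ≤ v ∧ v + 1 ≤ 3*n then some (2*(v - 2*n) + c (v - 2*n) + 1)
  else if 1 ≤ (v-1)/2 ∧ (v-1)/2 + 1 ≤ n ∧ (v-1) % 2 = c ((v-1)/2) then some (2*n + (v-1)/2)
  else none

/-- Bob's matching (on ℕ pipes). -/
def nbF (n : ℕ) (c : ℕ → ℕ) : ℕ → Option ℕ := fun v =>
  if v/2 + 2 ≤ n ∧ v % 2 = c (v/2) then some (2*n + v/2)
  else if 2*n ≤ v ∧ v + 2 ≤ 3*n then some (2*(v - 2*n) + c (v - 2*n))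
  else if v/2 + 1 ≤ n ∧ v % 2 = 1 - c (v/2) then
    if (v/2) % 2 = 1 then some (2*(v/2 - 1) + (1 - c (v/2 - 1)))
    else if v/2 + 2 ≤ n then some (2*(v/2 + 1) + (1 - c (v/2 + 1)))
    else some (3*n - 1)
  else if v = 3*n - 1 ∧ n % 2 = 1 then some (2*(n-1) + (1 - c (n-1)))
  else none

section Eval
variable {n : ℕ} {c : ℕ → ℕ} (hc : ∀ i, c i ≤ 1)

lemma A0 : naF n c 0 = some (c 0 + 1) := by simp [naF]

lemma A1 : naF n c (c 0 + 1) = some 0 := by simp [naF]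

include hc

lemma A2 {j : ℕ} (hj1 : 1 ≤ j) (hj2 : j + 1 ≤ n) :
    naF n c (2*n + j) = some (2*j + c j + 1) := by
  have h1 := hc 0
  have hd : 2*n + j - 2*n = j := by omega
  simp only [naF, hd, and_true, true_and]
  split_ifs <;> first | rfl | contradiction | omega

lemma A3 {t : ℕ} (ht1 : 1 ≤ t) (ht2 : t + 1 ≤ n) :
    naF n c (2*t + c t + 1) = some (2*n + t) := by
  have h1 := hc 0
  have h2 := hc t
  have hd : (2*t + c t + 1 - 1)/2 = t := by omega
  have hm : (2*t + c t + 1 - 1) % 2 = c t := by omega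
  simp only [naF, hd, hm, and_true, true_and]
  split_ifs <;> first | rfl | contradiction | omega

lemma A4 {t : ℕ} (ht : t + 1 ≤ n) :
    naF n c (2*t + (1 - c t) + 1) = none := by
  have h1 := hc 0
  have h2 := hc t
  have hd : (2*t + (1 - c t) + 1 - 1)/2 = t := by omega
  have hm : (2*t + (1 - c t) + 1 - 1) % 2 = 1 - c t := by omega
  simp only [naF, hd, hm, and_true, true_and]
  rcases Nat.eq_zero_or_pos t with rfl | ht1 <;>
    split_ifs <;> first | rfl | contradiction | omega

lemma A5 (hn : 1 ≤ n) : naF n c (3*n) = none := by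
  have h1 := hc 0
  have h2 := hc ((3*n - 1)/2)
  simp only [naF, and_true, true_and]
  split_ifs <;> first | rfl | contradiction | omega

lemma B0 {j : ℕ} (hj : j + 2 ≤ n) : nbF n c (2*j + c j) = some (2*n + j) := by
  have h2 := hc j
  have hd : (2*j + c j)/2 = j := by omega
  have hm : (2*j + c j) % 2 = c j := by omega
  simp only [nbF, hd, hm, and_true, true_and]
  split_ifs <;> first | rfl | contradiction | omega

lemma B1 {j : ℕ} (hj : j + 2 ≤ n) : nbF n c (2*n + j) = some (2*j + c j) := by
  have h2 := hc j
  have hd : 2*n + j - 2*n = j := by omega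
  have hd2 : (2*n + j)/2 + 2 ≤ n → False := by omega
  simp only [nbF, hd, and_true, true_and]
  split_ifs <;> first | rfl | contradiction | omega

lemma B2odd {i : ℕ} (hi : i % 2 = 1) (hin : i + 1 ≤ n) :
    nbF n c (2*i + (1 - c i)) = some (2*(i-1) + (1 - c (i-1))) := by
  have h2 := hc i
  have hd : (2*i + (1 - c i))/2 = i := by omega
  have hm : (2*i + (1 - c i)) % 2 = 1 - c i := by omega
  simp only [nbF, hd, hm, and_true, true_and]
  split_ifs <;> first | rfl | contradiction | omega

lemma B2even {i : ℕ} (hi : i % 2 = 0) (hin : i + 2 ≤ n) :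
    nbF n c (2*i + (1 - c i)) = some (2*(i+1) + (1 - c (i+1))) := by
  have h2 := hc i
  have hd : (2*i + (1 - c i))/2 = i := by omega
  have hm : (2*i + (1 - c i)) % 2 = 1 - c i := by omega
  simp only [nbF, hd, hm, and_true, true_and]
  split_ifs <;> first | rfl | contradiction | omega

lemma B2last (hn : n % 2 = 1) :
    nbF n c (2*(n-1) + (1 - c (n-1))) = some (3*n - 1) := by
  have h2 := hc (n-1)
  have hd : (2*(n-1) + (1 - c (n-1)))/2 = n-1 := by omega
  have hm : (2*(n-1) + (1 - c (n-1))) % 2 = 1 - c (n-1) := by omega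
  simp only [nbF, hd, hm, and_true, true_and]
  split_ifs <;> first | rfl | contradiction | omega

lemma B3 (hn : n % 2 = 1) :
    nbF n c (3*n - 1) = some (2*(n-1) + (1 - c (n-1))) := by
  have h2 := hc ((3*n-1)/2)
  simp only [nbF, and_true, true_and]
  split_ifs <;> first | rfl | contradiction | omega

lemma B4 (hn : 1 ≤ n) : nbF n c (2*(n-1) + c (n-1)) = none := by
  have h2 := hc (n-1)
  have hd : (2*(n-1) + c (n-1))/2 = n-1 := by omega
  have hm : (2*(n-1) + c (n-1)) % 2 = c (n-1) := by omega
  simp only [nbF, hd, hm, and_true, true_and]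
  split_ifs <;> first | rfl | contradiction | omega

lemma B5 : nbF 0 c 0 = none := by
  simp [nbF]

end Eval


section PM
variable {n : ℕ} {c : ℕ → ℕ} (hc : ∀ i, c i ≤ 1)
include hc

lemma naF_pm : IsPartialMatching (naF n c) := by
  intro v j h
  have h0 := hc 0
  simp only [naF] at h
  split_ifs at h with k1 k2 k3 k4
  · rw [Option.some.injEq] at h; subst h; subst k1
    exact ⟨by omega, A1⟩
  · rw [Option.some.injEq] at h; subst h; subst k2
    exact ⟨by omega, A0⟩
  · rw [Option.some.injEq] at h; subst h
    have hct := hc (v - 2*n)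
    refine ⟨by omega, ?_⟩
    rw [A3 hc (by omega) (by omega)]
    simp only [Option.some.injEq]; omega
  · obtain ⟨k4a, k4b, k4c⟩ := k4
    rw [Option.some.injEq] at h; subst h
    have hct := hc ((v-1)/2)
    refine ⟨by omega, ?_⟩
    rw [A2 hc k4a k4b]
    simp only [Option.some.injEq]; omega

lemma nbF_pm : IsPartialMatching (nbF n c) := by
  intro v j h
  simp only [nbF] at h
  split_ifs at h with k1 k2 k3 k4 k5 k6
  · obtain ⟨k1a, k1b⟩ := k1
    rw [Option.some.injEq] at h; subst h
    have hv := hc (v/2)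
    refine ⟨by omega, ?_⟩
    rw [B1 hc k1a]
    simp only [Option.some.injEq]; omega
  · obtain ⟨k2a, k2b⟩ := k2
    rw [Option.some.injEq] at h; subst h
    have hv := hc (v - 2*n)
    refine ⟨by omega, ?_⟩
    rw [B0 hc (by omega)]
    simp only [Option.some.injEq]; omega
  · -- C3 true, D1 true (v/2 odd)
    obtain ⟨k3a, k3b⟩ := k3
    rw [Option.some.injEq] at h; subst h
    have hv := hc (v/2)
    have hv1 := hc (v/2 - 1)
    refine ⟨by omega, ?_⟩
    rw [B2even hc (by omega) (by omega), show v/2 - 1 + 1 = v/2 by omega]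
    simp only [Option.some.injEq]; omega
  · -- C3 true, D1 false, D2 true
    obtain ⟨k3a, k3b⟩ := k3
    rw [Option.some.injEq] at h; subst h
    have hv := hc (v/2)
    have hv1 := hc (v/2 + 1)
    refine ⟨by omega, ?_⟩
    rw [B2odd hc (by omega) (by omega), show v/2 + 1 - 1 = v/2 by omega]
    simp only [Option.some.injEq]; omega
  · -- C3 true, D1 false, D2 false : v/2 = n-1, n odd
    obtain ⟨k3a, k3b⟩ := k3
    rw [Option.some.injEq] at h; subst h
    have hv := hc (v/2)
    have hn : n % 2 = 1 := by omega
    refine ⟨by omega, ?_⟩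
    rw [B3 hc hn, show n - 1 = v/2 by omega]
    simp only [Option.some.injEq]; omega
  · obtain ⟨k6a, k6b⟩ := k6
    rw [Option.some.injEq] at h; subst h
    have hv := hc (n-1)
    refine ⟨by omega, ?_⟩
    rw [B2last hc k6b]
    simp only [Option.some.injEq]; omega

end PM



/-- Restrict a partner function on `ℕ` to `Fin m`. -/
def restrictM (m : ℕ) (f : ℕ → Option ℕ) : Fin m → Option (Fin m) :=
  fun v => (f v.val).bind (fun k => if h : k < m then some ⟨k, h⟩ else none)

lemma restrictM_pm {m : ℕ} {f : ℕ → Option ℕ} (hf : IsPartialMatching f) :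
    IsPartialMatching (restrictM m f) := by
  intro i j h
  simp only [restrictM] at h
  cases hfi : f i.val with
  | none => rw [hfi] at h; simp at h
  | some k =>
    rw [hfi] at h
    simp only [Option.bind_some] at h
    split_ifs at h with hk
    · rw [Option.some.injEq] at h
      obtain ⟨hik, hrev⟩ := hf i.val k hfi
      subst h
      refine ⟨fun e => hik (congrArg Fin.val e), ?_⟩
      simp [restrictM, hrev, i.isLt]

section Steps
variable {s : ℕ} {na nb : ℕ → Option ℕ}

lemma stepA {p q : ℕ} (hp : p < s) (hq : q < s) (h : na (p+1) = some (q+1)) :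
    ghStep (restrictM (s+1) na) (restrictM s nb) (GHState.atAlice ⟨p, hp⟩)
      = GHState.atBob ⟨q, hq⟩ := by
  have h1 : restrictM (s+1) na ((⟨p, hp⟩ : Fin s).succ) = some (⟨q+1, by omega⟩ : Fin (s+1)) := by
    have e : ((⟨p, hp⟩ : Fin s).succ : Fin (s+1)).val = p + 1 := rfl
    rw [restrictM, e, h]
    exact dif_pos (by omega)
  rw [ghStep, h1]
  have h2 : toPipe (⟨q+1, by omega⟩ : Fin (s+1)) = some ⟨q, hq⟩ := by
    rw [toPipe]; simp
  simp [h2]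

lemma stepA_none {p : ℕ} (hp : p < s) (h : na (p+1) = none) :
    ghStep (restrictM (s+1) na) (restrictM s nb) (GHState.atAlice ⟨p, hp⟩)
      = GHState.exitA := by
  have h1 : restrictM (s+1) na ((⟨p, hp⟩ : Fin s).succ) = none := by
    have e : ((⟨p, hp⟩ : Fin s).succ : Fin (s+1)).val = p + 1 := rfl
    rw [restrictM, e, h]; rfl
  rw [ghStep, h1]

lemma stepB {p q : ℕ} (hp : p < s) (hq : q < s) (h : nb p = some q) :
    ghStep (restrictM (s+1) na) (restrictM s nb) (GHState.atBob ⟨p, hp⟩)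
      = GHState.atAlice ⟨q, hq⟩ := by
  have h1 : restrictM s nb ⟨p, hp⟩ = some ⟨q, hq⟩ := by
    rw [restrictM]
    show (nb p).bind _ = _
    rw [h]
    exact dif_pos hq
  rw [ghStep, h1]

lemma stepB_none {p : ℕ} (hp : p < s) (h : nb p = none) :
    ghStep (restrictM (s+1) na) (restrictM s nb) (GHState.atBob ⟨p, hp⟩)
      = GHState.exitB := by
  have h1 : restrictM s nb ⟨p, hp⟩ = none := by
    rw [restrictM]
    show (nb p).bind _ = _
    rw [h]; rfl
  rw [ghStep, h1]

lemma startEval {q : ℕ} (hq : q < s) (h : na 0 = some (q+1)) :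
    ghStart (restrictM (s+1) na) = GHState.atBob ⟨q, hq⟩ := by
  have h1 : restrictM (s+1) na (0 : Fin (s+1)) = some (⟨q+1, by omega⟩ : Fin (s+1)) := by
    rw [restrictM]
    show (na 0).bind _ = _
    rw [h]
    exact dif_pos (by omega)
  rw [ghStart, h1]
  have h2 : toPipe (⟨q+1, by omega⟩ : Fin (s+1)) = some ⟨q, hq⟩ := by
    rw [toPipe]; simp
  simp [h2]

lemma result_of {m : ℕ} (hm : m ≤ 2*s+2) {st : GHState s}
    (h : (ghStep (restrictM (s+1) na) (restrictM s nb))^[m]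
          (ghStart (restrictM (s+1) na)) = st)
    (hfix : ghStep (restrictM (s+1) na) (restrictM s nb) st = st) :
    ghResult (restrictM (s+1) na) (restrictM s nb) = st := by
  have e : 2*s+2 = (2*s+2-m)+m := by omega
  rw [ghResult, e, Function.iterate_add_apply, h, Function.iterate_fixed hfix]

end Steps


section Run
variable {n : ℕ} {cx cy : ℕ → ℕ}

lemma water (hcx : ∀ i, cx i ≤ 1) (hcy : ∀ i, cy i ≤ 1) :
    ∀ i, ∀ _hi : i < n, (∀ j, j < i → cx j = cy j) →
      (ghStep (restrictM (3*n+1+1) (naF n cx)) (restrictM (3*n+1) (nbF n cy)))^[2*i]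
        (ghStart (restrictM (3*n+1+1) (naF n cx)))
        = GHState.atBob ⟨2*i + cx i, by have := hcx i; omega⟩ := by
  intro i
  induction i with
  | zero =>
    intro hi _
    simp only [Nat.mul_zero, Function.iterate_zero_apply]
    apply startEval (by have := hcx 0; omega)
    rw [A0]
    simp only [Option.some.injEq]; omega
  | succ k ih =>
    intro hi hag
    have hk : k < n := by omega
    have hprev := ih hk (fun j hj => hag j (by omega))
    have hB : nbF n cy (2*k + cx k) = some (2*n + k) := by
      rw [hag k (by omega)]
      exact B0 hcy (by omega)
    have hA : naF n cx ((2*n+k) + 1) = some ((2*(k+1) + cx (k+1)) + 1) :=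
      A2 (j := k+1) hcx (by omega) (by omega)
    have e : 2*(k+1) = 2*k+1+1 := by ring
    conv_lhs => rw [e]
    rw [Function.iterate_succ_apply', Function.iterate_succ_apply', hprev,
        stepB (by have := hcx k; omega) (by omega) hB,
        stepA (by omega) (by have := hcx (k+1); omega) hA]

lemma run_eq (hcx : ∀ i, cx i ≤ 1) (hcy : ∀ i, cy i ≤ 1) (hc0 : n = 0 → cx 0 = 0)
    (heq : ∀ j, j < n → cx j = cy j) :
    ghResult (restrictM (3*n+1+1) (naF n cx)) (restrictM (3*n+1) (nbF n cy))
      = GHState.exitB := by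
  rcases Nat.eq_zero_or_pos n with rfl | hn
  · apply result_of (m := 1) (by omega)
    · rw [Function.iterate_one,
          startEval (q := 0) (by omega) (by rw [A0, hc0 rfl]),
          stepB_none (by omega) (B5 hcy)]
    · rfl
  · apply result_of (m := 2*(n-1)+1) (by omega)
    · rw [Function.iterate_succ_apply',
          water hcx hcy (n-1) (by omega) (fun j hj => heq j (by omega))]
      apply stepB_none (by have := hcx (n-1); omega)
      rw [heq (n-1) (by omega)]
      exact B4 hcy (by omega)
    · rfl

lemma run_ne (hcx : ∀ i, cx i ≤ 1) (hcy : ∀ i, cy i ≤ 1) (i : ℕ) (hi : i < n)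
    (hne : cx i ≠ cy i) (hmin : ∀ j, j < i → cx j = cy j) :
    ghResult (restrictM (3*n+1+1) (naF n cx)) (restrictM (3*n+1) (nbF n cy))
      = GHState.exitA := by
  have hxi := hcx i
  have hyi := hcy i
  have hix : cx i = 1 - cy i := by omega
  have hw := water hcx hcy i hi hmin
  by_cases hpar : i % 2 = 1
  · have hB : nbF n cy (2*i + cx i) = some (2*(i-1) + (1 - cy (i-1))) := by
      rw [hix]; exact B2odd hcy hpar (by omega)
    have hA : naF n cx ((2*(i-1) + (1 - cy (i-1))) + 1) = none := by
      rw [show cy (i-1) = cx (i-1) from (hmin (i-1) (by omega)).symm]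
      exact A4 hcx (by omega)
    apply result_of (m := 2*i+1+1) (by omega)
    · rw [Function.iterate_succ_apply', Function.iterate_succ_apply', hw,
          stepB (by omega) (by omega) hB,
          stepA_none (by omega) hA]
    · rfl
  · have hpar0 : i % 2 = 0 := by omega
    by_cases hlast : i + 2 ≤ n
    · have hB : nbF n cy (2*i + cx i) = some (2*(i+1) + (1 - cy (i+1))) := by
        rw [hix]; exact B2even hcy hpar0 hlast
      by_cases hnx : cx (i+1) = cy (i+1)
      · have hA : naF n cx ((2*(i+1) + (1 - cy (i+1))) + 1) = none := by
          rw [← hnx]; exact A4 hcx (by omega)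
        apply result_of (m := 2*i+1+1) (by omega)
        · rw [Function.iterate_succ_apply', Function.iterate_succ_apply', hw,
              stepB (by omega) (by omega) hB,
              stepA_none (by omega) hA]
        · rfl
      · have hx1 := hcx (i+1)
        have hy1 := hcy (i+1)
        have hA : naF n cx ((2*(i+1) + (1 - cy (i+1))) + 1) = some ((2*n+i) + 1) := by
          rw [show 1 - cy (i+1) = cx (i+1) by omega]
          exact A3 (t := i+1) hcx (by omega) (by omega)
        have hB2 : nbF n cy (2*n+i) = some (2*i + cy i) := B1 hcy (by omega)
        have hA2 : naF n cx ((2*i + cy i) + 1) = none := by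
          rw [show cy i = 1 - cx i by omega]
          exact A4 hcx (by omega)
        apply result_of (m := 2*i+1+1+1+1) (by omega)
        · rw [Function.iterate_succ_apply', Function.iterate_succ_apply',
              Function.iterate_succ_apply', Function.iterate_succ_apply', hw,
              stepB (by omega) (by omega) hB,
              stepA (by omega) (by omega) hA,
              stepB (by omega) (by omega) hB2,
              stepA_none (by omega) hA2]
        · rfl
    · have hB : nbF n cy (2*i + cx i) = some (3*n - 1) := by
        rw [hix, show i = n-1 by omega]
        exact B2last hcy (by omega)
      have hA : naF n cx ((3*n-1) + 1) = none := by
        rw [show 3*n-1+1 = 3*n by omega]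
        exact A5 hcx (by omega)
      apply result_of (m := 2*i+1+1) (by omega)
      · rw [Function.iterate_succ_apply', Function.iterate_succ_apply', hw,
            stepB (by omega) (by omega) hB,
            stepA_none (by omega) hA]
      · rfl

end Run
end Scratch

namespace Scratch

/-- The bit string `x` viewed as a `{0,1}`-valued function on `ℕ`. -/
def bitv (n : ℕ) (x : Fin n → Bool) : ℕ → ℕ :=
  fun i => if h : i < n then (x ⟨i, h⟩).toNat else 0

lemma bitv_le (n : ℕ) (x : Fin n → Bool) : ∀ i, bitv n x i ≤ 1 := by
  intro i
  simp only [bitv]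
  split_ifs with h
  · cases x ⟨i, h⟩ <;> simp
  · omega

/-- The garden-hose game of size `3n+1` computing equality. -/
def EQGame (n : ℕ) : GHGame n (3*n+1) where
  EA x := restrictM (3*n+1+1) (naF n (bitv n x))
  EB y := restrictM (3*n+1) (nbF n (bitv n y))
  matchA x := restrictM_pm (naF_pm (bitv_le n x))
  matchB y := restrictM_pm (nbF_pm (bitv_le n y))

lemma EQGame_computes (n : ℕ) : (EQGame n).Computes (EQfun n) := by
  intro x y
  have hrun : (EQGame n).run x y
      = ghResult (restrictM (3*n+1+1) (naF n (bitv n x)))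
        (restrictM (3*n+1) (nbF n (bitv n y))) := rfl
  by_cases hxy : x = y
  · subst hxy
    simp only [EQfun, decide_eq_true_eq, if_pos rfl, if_true]
    rw [hrun]
    exact run_eq (bitv_le n x) (bitv_le n x)
      (fun h => by subst h; simp [bitv]) (fun j _ => rfl)
  · have : EQfun n x y = false := by simp [EQfun, hxy]
    rw [this, if_neg (by simp), hrun]
    have hex : ∃ j, bitv n x j ≠ bitv n y j := by
      obtain ⟨a, ha⟩ := Function.ne_iff.mp hxy
      refine ⟨a.val, ?_⟩
      have e1 : bitv n x a.val = (x a).toNat := by simp [bitv, a.isLt]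
      have e2 : bitv n y a.val = (y a).toNat := by simp [bitv, a.isLt]
      rw [e1, e2]
      revert ha
      cases x a <;> cases y a <;> simp
    have hPi : bitv n x (Nat.find hex) ≠ bitv n y (Nat.find hex) := Nat.find_spec hex
    have hmin : ∀ j, j < Nat.find hex → bitv n x j = bitv n y j := by
      intro j hj
      have := Nat.find_min hex hj
      omega
    have hi : Nat.find hex < n := by
      by_contra hni
      apply hPi
      have hz : ∀ (z : Fin n → Bool) k, ¬ k < n → bitv n z k = 0 := by
        intro z k hk; simp [bitv, hk]
      rw [hz x _ hni, hz y _ hni]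
    exact run_ne (bitv_le n x) (bitv_le n y) (Nat.find hex) hi hPi hmin

end Scratch

/-- The equality function can be computed in the garden-hose model with
`3n + 1` pipes: `GH(EQ) ≤ 3n + 1`. -/

theorem gh_eq_upper_bound (n : ℕ) :
    (∃ G : GHGame n (3 * n + 1), G.Computes (EQfun n)) ∧
      GH (EQfun n) ≤ 3 * n + 1 := by
  have h : ∃ G : GHGame n (3 * n + 1), G.Computes (EQfun n) :=
    ⟨Scratch.EQGame n, Scratch.EQGame_computes n⟩
  exact ⟨h, Nat.sInf_le h⟩
end

section
/- For every Boolean function f : {0,1}^n × {0,1}^n → {0,1}, the deterministic one-way communication complexity D¹(f) satisfies D¹(f) ≤ (s+1) · ⌈log₂(s+1)⌉, where s = GH(f): any garden-hose game of size s computing f yields a one-way protocol in which Alice sends an encoding of her connections E_A(x), from which Bob computes f(x,y). -/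
/-- The deterministic one-way communication complexity of `f`: the minimal `m`
such that there are functions `a : {0,1}^n → {0,1}^m` (Alice's message) and
`g : {0,1}^m × {0,1}^n → {0,1}` (Bob's output) with `g (a x) y = f x y` for
all inputs. -/
noncomputable def oneWayCC {n : ℕ}
    (f : (Fin n → Bool) → (Fin n → Bool) → Bool) : ℕ :=
  sInf {m : ℕ | ∃ (a : (Fin n → Bool) → Fin m → Bool)
    (g : (Fin m → Bool) → (Fin n → Bool) → Bool), ∀ x y, g (a x) y = f x y}

section Aux

/-- Encode a boolean string as a number below `2 ^ n`. -/
def encEq (n : ℕ) : (Fin n → Bool) ≃ Fin (2 ^ n) :=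
  (Equiv.arrowCongr (Equiv.refl (Fin n)) finTwoEquiv.symm).trans finFunctionFinEquiv

/-- Alice's universal connections. -/
def univEA (n : ℕ) (x : Fin n → Bool) :
    Fin (2 ^ n + 2 ^ n + 1) → Option (Fin (2 ^ n + 2 ^ n + 1)) := fun k =>
  if (k : ℕ) = 0 then
    some ⟨(encEq n x : ℕ) + 1, by have := (encEq n x).isLt; omega⟩
  else if (k : ℕ) = (encEq n x : ℕ) + 1 then some ⟨0, Nat.succ_pos _⟩ else none

/-- Bob's universal connections. -/
def univEB (n : ℕ) (f : (Fin n → Bool) → (Fin n → Bool) → Bool) (y : Fin n → Bool) :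
    Fin (2 ^ n + 2 ^ n) → Option (Fin (2 ^ n + 2 ^ n)) := fun p =>
  if hp : (p : ℕ) < 2 ^ n then
    if f ((encEq n).symm ⟨p, hp⟩) y then none
    else some ⟨2 ^ n + p, by have := p.isLt; omega⟩
  else
    if f ((encEq n).symm ⟨(p : ℕ) - 2 ^ n, by have := p.isLt; omega⟩) y then none
    else some ⟨(p : ℕ) - 2 ^ n, by have := p.isLt; omega⟩

lemma univEA_matching (n : ℕ) (x : Fin n → Bool) : IsPartialMatching (univEA n x) := by
  intro i j h
  have hlt := (encEq n x).isLt
  unfold univEA at h ⊢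
  split_ifs at h with h0 h1
  · have hj : (encEq n x : ℕ) + 1 = (j : ℕ) := congrArg Fin.val (Option.some.inj h)
    refine ⟨fun he => by rw [he] at h0; omega, ?_⟩
    rw [if_neg (by omega), if_pos hj.symm]
    exact congrArg some (Fin.ext h0.symm)
  · have hj : (0 : ℕ) = (j : ℕ) := congrArg Fin.val (Option.some.inj h)
    refine ⟨fun he => by rw [he] at h1; omega, ?_⟩
    rw [if_pos hj.symm]
    exact congrArg some (Fin.ext h1.symm)

lemma univEB_matching (n : ℕ) (f : (Fin n → Bool) → (Fin n → Bool) → Bool)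
    (y : Fin n → Bool) : IsPartialMatching (univEB n f y) := by
  intro i j h
  have hN : 0 < 2 ^ n := Nat.pow_pos (n := n) (by norm_num)
  have hi := i.isLt
  have hjlt := j.isLt
  unfold univEB at h ⊢
  split_ifs at h with h0 h1 h2
  · have hj : 2 ^ n + (i : ℕ) = (j : ℕ) := congrArg Fin.val (Option.some.inj h)
    refine ⟨fun he => by rw [he] at h0; omega, ?_⟩
    rw [dif_neg (show ¬ ((j : ℕ) < 2 ^ n) by omega)]
    have harg : (⟨(j : ℕ) - 2 ^ n, by omega⟩ : Fin (2 ^ n)) = ⟨(i : ℕ), h0⟩ :=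
      Fin.ext (by simp; omega)
    rw [harg, if_neg h1]
    exact congrArg some (Fin.ext (by simp; omega))
  · have hj : (i : ℕ) - 2 ^ n = (j : ℕ) := congrArg Fin.val (Option.some.inj h)
    refine ⟨fun he => by rw [he] at h0; omega, ?_⟩
    rw [dif_pos (show (j : ℕ) < 2 ^ n by omega)]
    have harg : (⟨(j : ℕ), by omega⟩ : Fin (2 ^ n)) = ⟨(i : ℕ) - 2 ^ n, by omega⟩ :=
      Fin.ext (by simp; omega)
    rw [harg, if_neg h2]
    exact congrArg some (Fin.ext (by simp; omega))

/-- The universal garden-hose game computing `f`. -/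
def univGame (n : ℕ) (f : (Fin n → Bool) → (Fin n → Bool) → Bool) :
    GHGame n (2 ^ n + 2 ^ n) where
  EA := univEA n
  EB := univEB n f
  matchA := univEA_matching n
  matchB := univEB_matching n f

lemma univGame_computes (n : ℕ) (f : (Fin n → Bool) → (Fin n → Bool) → Bool) :
    (univGame n f).Computes f := by
  intro x y
  have hv := (encEq n x).isLt
  have hN : 0 < 2 ^ n := Nat.pow_pos (n := n) (by norm_num)
  show ghResult (univEA n x) (univEB n f y) = _
  have hstart : ghStart (univEA n x) =
      GHState.atBob ⟨(encEq n x : ℕ), by omega⟩ := by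
    have h0 : univEA n x 0 = some ⟨(encEq n x : ℕ) + 1, by omega⟩ := by
      simp [univEA]
    simp [ghStart, h0, toPipe]
  have hfy : ∀ (p : (encEq n x : ℕ) < 2 ^ n),
      f ((encEq n).symm ⟨(encEq n x : ℕ), p⟩) y = f x y := by
    intro p
    congr 1
    have : (⟨(encEq n x : ℕ), p⟩ : Fin (2 ^ n)) = encEq n x := rfl
    rw [this, Equiv.symm_apply_apply]
  rw [ghResult, hstart,
    show 2 * (2 ^ n + 2 ^ n) + 2 = (2 * (2 ^ n + 2 ^ n) + 1) + 1 by omega,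
    Function.iterate_succ_apply]
  by_cases hf : f x y
  · have hb : univEB n f y ⟨(encEq n x : ℕ), by omega⟩ = none := by
      unfold univEB
      rw [dif_pos (show ((⟨(encEq n x : ℕ), by omega⟩ : Fin (2 ^ n + 2 ^ n)) : ℕ) < 2 ^ n
        from hv)]
      rw [hfy hv, if_pos hf]
    have hstep : ghStep (univEA n x) (univEB n f y)
        (GHState.atBob ⟨(encEq n x : ℕ), by omega⟩) = GHState.exitB := by
      simp [ghStep, hb]
    rw [hstep, Function.iterate_fixed (ghStep_exitB _ _)]
    simp [hf]
  · have hb : univEB n f y ⟨(encEq n x : ℕ), by omega⟩ =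
        some ⟨2 ^ n + (encEq n x : ℕ), by omega⟩ := by
      unfold univEB
      rw [dif_pos (show ((⟨(encEq n x : ℕ), by omega⟩ : Fin (2 ^ n + 2 ^ n)) : ℕ) < 2 ^ n
        from hv)]
      rw [hfy hv, if_neg hf]
    have hstep : ghStep (univEA n x) (univEB n f y)
        (GHState.atBob ⟨(encEq n x : ℕ), by omega⟩) =
        GHState.atAlice ⟨2 ^ n + (encEq n x : ℕ), by omega⟩ := by
      simp [ghStep, hb]
    rw [hstep,
      show 2 * (2 ^ n + 2 ^ n) + 1 = (2 * (2 ^ n + 2 ^ n)) + 1 by omega,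
      Function.iterate_succ_apply]
    have ha : univEA n x
        (⟨2 ^ n + (encEq n x : ℕ), by omega⟩ : Fin (2 ^ n + 2 ^ n)).succ = none := by
      unfold univEA
      rw [if_neg (by simp only [Fin.val_succ]; omega), if_neg (by simp only [Fin.val_succ]; omega)]
    have hstep2 : ghStep (univEA n x) (univEB n f y)
        (GHState.atAlice ⟨2 ^ n + (encEq n x : ℕ), by omega⟩) = GHState.exitA := by
      simp only [ghStep, ha]
    rw [hstep2, Function.iterate_fixed (ghStep_exitA _ _)]
    simp [hf]

lemma matching_eq_of_getD_eq {V : Type*} {m m' : V → Option V}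
    (hm : IsPartialMatching m) (hm' : IsPartialMatching m') (i : V)
    (h : (m i).getD i = (m' i).getD i) : m i = m' i := by
  cases hmi : m i with
  | none =>
    cases hmi' : m' i with
    | none => rfl
    | some j =>
      rw [hmi, hmi'] at h
      simp at h
      exact absurd h (hm' i j hmi').1
  | some j =>
    cases hmi' : m' i with
    | none =>
      rw [hmi, hmi'] at h
      simp at h
      exact absurd h.symm (hm i j hmi).1
    | some j' =>
      rw [hmi, hmi'] at h
      simp at h
      rw [h]

/-- Alice's message: the bit-encoding of her connections, where an unmatched
vertex is encoded as its own partner. -/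
def msgOf {n s : ℕ} (G : GHGame n s) (x : Fin n → Bool)
    (k : Fin ((s + 1) * Nat.clog 2 (s + 1))) : Bool :=
  Nat.testBit
    (((G.EA x (finProdFinEquiv.symm k).1).getD (finProdFinEquiv.symm k).1 : Fin (s + 1)) : ℕ)
    ((finProdFinEquiv.symm k).2 : ℕ)

lemma msgOf_inj {n s : ℕ} (G : GHGame n s) {x x' : Fin n → Bool}
    (h : msgOf G x = msgOf G x') : G.EA x = G.EA x' := by
  funext i
  refine matching_eq_of_getD_eq (G.matchA x) (G.matchA x') i (Fin.val_injective ?_)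
  apply Nat.eq_of_testBit_eq
  intro j
  by_cases hj : j < Nat.clog 2 (s + 1)
  · have := congrFun h (finProdFinEquiv (i, ⟨j, hj⟩))
    simpa [msgOf] using this
  · have hle : 2 ^ Nat.clog 2 (s + 1) ≤ 2 ^ j :=
      Nat.pow_le_pow_right (by norm_num) (le_of_not_gt hj)
    have hb : ∀ o : Option (Fin (s + 1)), ((o.getD i : Fin (s + 1)) : ℕ) < 2 ^ j :=
      fun o => lt_of_lt_of_le (lt_of_lt_of_le (o.getD i).isLt
        (Nat.le_pow_clog one_lt_two _)) hle
    rw [Nat.testBit_lt_two_pow (hb _), Nat.testBit_lt_two_pow (hb _)]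

end Aux

/-- For every `f`, the deterministic one-way communication complexity satisfies
`D¹(f) ≤ (s + 1) · ⌈log₂ (s + 1)⌉` where `s = GH f`. -/
theorem oneWayCC_le_gh (n : ℕ)
    (f : (Fin n → Bool) → (Fin n → Bool) → Bool) :
    oneWayCC f ≤ (GH f + 1) * Nat.clog 2 (GH f + 1) := by
  classical
  have hne : {s : ℕ | ∃ G : GHGame n s, G.Computes f}.Nonempty :=
    ⟨2 ^ n + 2 ^ n, univGame n f, univGame_computes n f⟩
  obtain ⟨G, hG⟩ : ∃ G : GHGame n (GH f), G.Computes f := Nat.sInf_mem hne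
  unfold oneWayCC
  apply Nat.sInf_le
  refine ⟨msgOf G, fun msg y =>
    if h : ∃ x, msgOf G x = msg then f h.choose y else false, ?_⟩
  intro x y
  have hx : ∃ x', msgOf G x' = msgOf G x := ⟨x, rfl⟩
  beta_reduce
  rw [dif_pos hx]
  have hEA := msgOf_inj G hx.choose_spec
  have h1 := hG hx.choose y
  have h2 := hG x y
  rw [show G.run hx.choose y = G.run x y from by
    show ghResult (G.EA hx.choose) _ = ghResult (G.EA x) _; rw [hEA], h2] at h1
  by_cases hfy : f x y <;> by_cases hfy2 : f hx.choose y <;> simp_all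
end
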